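/- arXiv:2504.10951 — 4 statements merged into one kernel-verified Lean document; each statement's English description precedes it below -/
import Mathlib

section
/- (One-sided Lipschitz velocity field.) Let (x^i)_{i=1}^N, (v^i)_{i=1}^{N−1} be a solution of the particle system on (0, t'). Then there exists a constant C ≥ 0 such that for all t ∈ [0, t') and all x, y ∈ ℝ: (A(x, t) − A(y, t))(x − y) ≤ C (x − y)². -/
open MeasureTheory Set Filter
open scoped ENNReal NNReal
open scoped Topology

/-- The velocity field `a(v) = f(v)/v`, extended by `a(0) = f'(0)`. -/
noncomputable def aF (f : ℝ → ℝ) (v : ℝ) : ℝ :=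
  if v = 0 then deriv f 0 else f v / v

/-- The particle velocity `V(v_l, v_r)`: the minimum of `a` over `[v_l, v_r]` if
`v_l ≤ v_r`, and the maximum of `a` over `[v_r, v_l]` if `v_r ≤ v_l`. -/
noncomputable def pV (f : ℝ → ℝ) (vl vr : ℝ) : ℝ :=
  if vl ≤ vr then sInf (aF f '' Set.Icc vl vr) else sSup (aF f '' Set.Icc vr vl)

/-- A solution of the particle system `ẋ^i = V(v^{i-1}, v^i)`,
`v^i_t = v₀^i Δx₀^i / Δx^i_t` on the time interval `[0, t')`, with the conventions
`v⁰ ≡ 0`, `v^N ≡ 0`. -/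
structure IsParticleSol (f : ℝ → ℝ) (N : ℕ) (x₀ v₀ : ℕ → ℝ) (t' : ℝ)
    (x v : ℕ → ℝ → ℝ) : Prop where
  init : ∀ i, 1 ≤ i → i ≤ N → x i 0 = x₀ i
  cont : ∀ i, 1 ≤ i → i ≤ N → ContinuousOn (x i) (Set.Ico 0 t')
  order : ∀ t ∈ Set.Ioo (0:ℝ) t', ∀ i, 1 ≤ i → i < N → x i t < x (i+1) t
  vzero : ∀ t, v 0 t = 0
  vN : ∀ t, v N t = 0
  ode : ∀ i, 1 ≤ i → i ≤ N → ∀ t ∈ Set.Ioo (0:ℝ) t',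
    HasDerivAt (x i) (pV f (v (i-1) t) (v i t)) t
  mass : ∀ i, 1 ≤ i → i < N → ∀ t ∈ Set.Ico (0:ℝ) t',
    v i t = v₀ i * (x₀ (i+1) - x₀ i) / (x (i+1) t - x i t)

section helpers
variable {f : ℝ → ℝ} {K : ℝ≥0}

lemma abs_aF_le (hf : LipschitzWith K f) (hf0 : f 0 = 0) (hfd : DifferentiableAt ℝ f 0)
    (w : ℝ) : |aF f w| ≤ K := by
  have key : ∀ u : ℝ, u ≠ 0 → |f u / u| ≤ K := by
    intro u hu
    rw [abs_div, div_le_iff₀ (abs_pos.2 hu)]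
    have := hf.dist_le_mul u 0
    simpa [hf0, Real.dist_eq] using this
  unfold aF
  split_ifs with h
  · have h1 : Tendsto (slope f 0) (𝓝[≠] 0) (𝓝 (deriv f 0)) :=
      hasDerivAt_iff_tendsto_slope.1 hfd.hasDerivAt
    have h2 : Tendsto (fun z => |slope f 0 z|) (𝓝[≠] 0) (𝓝 |deriv f 0|) :=
      h1.abs
    refine le_of_tendsto h2 ?_
    filter_upwards [self_mem_nhdsWithin] with z hz
    have hz' : z ≠ 0 := hz
    simpa [slope_def_field, hf0] using key z hz'
  · exact key w h

lemma bddBelow_aF_image (hf : LipschitzWith K f) (hf0 : f 0 = 0)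
    (hfd : DifferentiableAt ℝ f 0) (s : Set ℝ) : BddBelow (aF f '' s) := by
  refine ⟨-K, ?_⟩
  rintro y ⟨w, -, rfl⟩
  exact neg_le_of_abs_le (abs_aF_le hf hf0 hfd w)

lemma bddAbove_aF_image (hf : LipschitzWith K f) (hf0 : f 0 = 0)
    (hfd : DifferentiableAt ℝ f 0) (s : Set ℝ) : BddAbove (aF f '' s) := by
  refine ⟨K, ?_⟩
  rintro y ⟨w, -, rfl⟩
  exact le_of_abs_le (abs_aF_le hf hf0 hfd w)

variable (hf : LipschitzWith K f) (hf0 : f 0 = 0) (hfd : DifferentiableAt ℝ f 0)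
include hf hf0 hfd

lemma pV_le_aF {vl vr w : ℝ} (h : vl ≤ vr) (hw : w ∈ Set.Icc vl vr) :
    pV f vl vr ≤ aF f w := by
  rw [pV, if_pos h]
  exact csInf_le (bddBelow_aF_image hf hf0 hfd _) ⟨w, hw, rfl⟩

lemma aF_le_pV {vl vr w : ℝ} (h : vr ≤ vl) (hw : w ∈ Set.Icc vr vl) :
    aF f w ≤ pV f vl vr := by
  rw [pV]
  split_ifs with h'
  · have hvv : vl = vr := le_antisymm h' h
    subst hvv
    have : w = vl := le_antisymm hw.2 hw.1
    subst this
    rw [Set.Icc_self, Set.image_singleton, csInf_singleton]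
  · exact le_csSup (bddAbove_aF_image hf hf0 hfd _) ⟨w, hw, rfl⟩

lemma abs_pV_le (vl vr : ℝ) : |pV f vl vr| ≤ K := by
  rw [abs_le, pV]
  split_ifs with h
  · constructor
    · refine le_csInf ⟨aF f vl, ⟨vl, ⟨le_rfl, h⟩, rfl⟩⟩ ?_
      rintro y ⟨w, -, rfl⟩
      exact neg_le_of_abs_le (abs_aF_le hf hf0 hfd w)
    · have h1 : sInf (aF f '' Set.Icc vl vr) ≤ aF f vl :=
        csInf_le (bddBelow_aF_image hf hf0 hfd _) ⟨vl, ⟨le_rfl, h⟩, rfl⟩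
      exact h1.trans (le_of_abs_le (abs_aF_le hf hf0 hfd vl))
  · push_neg at h
    constructor
    · refine le_trans (neg_le_of_abs_le (abs_aF_le hf hf0 hfd vl)) ?_
      exact le_csSup (bddAbove_aF_image hf hf0 hfd _) ⟨vl, ⟨h.le, le_rfl⟩, rfl⟩
    · refine csSup_le ⟨aF f vl, ⟨vl, ⟨h.le, le_rfl⟩, rfl⟩⟩ ?_
      rintro y ⟨w, -, rfl⟩
      exact le_of_abs_le (abs_aF_le hf hf0 hfd w)

lemma pV_monotone_at_max {vl vm vr : ℝ} (hl : vl ≤ vm) (hr : vr ≤ vm) :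
    pV f vl vm ≤ pV f vm vr := by
  calc pV f vl vm ≤ aF f vm := pV_le_aF hf hf0 hfd hl ⟨hl, le_rfl⟩
  _ ≤ pV f vm vr := aF_le_pV hf hf0 hfd hr ⟨hr, le_rfl⟩

lemma pV_zero_mid {vl vr : ℝ} (hl : 0 ≤ vl) (hr : 0 ≤ vr) :
    pV f 0 vr ≤ pV f vl 0 := by
  calc pV f 0 vr ≤ aF f 0 := pV_le_aF hf hf0 hfd hr ⟨le_rfl, hr⟩
  _ ≤ pV f vl 0 := aF_le_pV hf hf0 hfd hl ⟨le_rfl, hl⟩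

end helpers


/-- **One-sided Lipschitz velocity field.** There is a constant `C ≥ 0` with
`(A(x,t) − A(y,t))(x − y) ≤ C (x − y)²` for all `t ∈ [0, tʹ)` and all `x, y ∈ ℝ`. -/
theorem one_sided_lipschitz_A
    (f : ℝ → ℝ) (K : ℝ≥0) (hf : LipschitzWith K f)
    (hf0 : f 0 = 0) (hfd : DifferentiableAt ℝ f 0)
    (N : ℕ) (hN : 2 ≤ N) (x₀ v₀ : ℕ → ℝ)
    (hx₀ : ∀ i, 1 ≤ i → i < N → x₀ i < x₀ (i+1))
    (hv₀nn : ∀ i, 1 ≤ i → i < N → 0 ≤ v₀ i)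
    (hv₀0 : v₀ 0 = 0) (hv₀N : v₀ N = 0)
    (t' : ℝ) (ht' : 0 < t') (x v : ℕ → ℝ → ℝ)
    (hsol : IsParticleSol f N x₀ v₀ t' x v)
    (A : ℝ → ℝ → ℝ)
    (hAl : ∀ t ∈ Set.Ico (0:ℝ) t', ∀ y, y ≤ x 1 t → A y t = pV f 0 (v 1 t))
    (hAr : ∀ t ∈ Set.Ico (0:ℝ) t', ∀ y, x N t ≤ y → A y t = pV f (v (N-1) t) 0)
    (hAmid : ∀ t ∈ Set.Ico (0:ℝ) t', ∀ i, 1 ≤ i → i < N →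
      ∀ y ∈ Set.Icc (x i t) (x (i+1) t),
        A y t = ((x (i+1) t - y) * pV f (v (i-1) t) (v i t)
          + (y - x i t) * pV f (v i t) (v (i+1) t)) / (x (i+1) t - x i t))
    :
    ∃ C : ℝ, 0 ≤ C ∧ ∀ t ∈ Set.Ico (0:ℝ) t', ∀ p q : ℝ,
      (A p t - A q t) * (p - q) ≤ C * (p - q) ^ 2 := by
  classical
  -- gaps are positive
  have xgap : ∀ r ∈ Set.Ico (0:ℝ) t', ∀ i, 1 ≤ i → i < N → 0 < x (i+1) r - x i r := by
    intro r hr i h1 h2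
    rcases eq_or_lt_of_le hr.1 with h0 | h0
    · rw [← h0, hsol.init (i+1) (by omega) (by omega), hsol.init i (by omega) (by omega)]
      linarith [hx₀ i h1 h2]
    · linarith [hsol.order r ⟨h0, hr.2⟩ i h1 h2]
  -- velocities are nonnegative
  have vnn : ∀ r ∈ Set.Ico (0:ℝ) t', ∀ j, j ≤ N → 0 ≤ v j r := by
    intro r hr j hj
    rcases Nat.eq_zero_or_pos j with h0 | h0
    · subst h0; rw [hsol.vzero]
    rcases eq_or_lt_of_le hj with hN' | hN'
    · subst hN'; rw [hsol.vN]
    · rw [hsol.mass j h0 hN' r hr]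
      exact div_nonneg (mul_nonneg (hv₀nn j h0 hN') (sub_pos.2 (hx₀ j h0 hN')).le)
        (xgap r hr j h0 hN').le
  -- velocities are continuous
  have vcont : ∀ j, 1 ≤ j → j < N → ContinuousOn (v j) (Set.Ico 0 t') := by
    intro j h1 h2
    have hx1 := hsol.cont (j+1) (by omega) (by omega)
    have hx2 := hsol.cont j h1 (by omega)
    have hform : ContinuousOn (fun r => v₀ j * (x₀ (j+1) - x₀ j) / (x (j+1) r - x j r))
        (Set.Ico 0 t') :=
      continuousOn_const.div (hx1.sub hx2) (fun r hr => ne_of_gt (xgap r hr j h1 h2))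
    exact hform.congr (fun r hr => hsol.mass j h1 h2 r hr)
  -- velocities are differentiable, with nonpositive derivative at a local max
  have vderiv : ∀ j, 1 ≤ j → j < N → ∀ z ∈ Set.Ioo (0:ℝ) t',
      ∃ d : ℝ, HasDerivAt (v j) d z ∧
        (v (j-1) z ≤ v j z → v (j+1) z ≤ v j z → d ≤ 0) := by
    intro j h1 h2 z hz
    have hzIco : z ∈ Set.Ico (0:ℝ) t' := ⟨hz.1.le, hz.2⟩
    have hΔ := xgap z hzIco j h1 h2
    have hne : x (j+1) z - x j z ≠ 0 := ne_of_gt hΔ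
    have hu : HasDerivAt (fun w => x (j+1) w - x j w)
        (pV f (v j z) (v (j+1) z) - pV f (v (j-1) z) (v j z)) z := by
      have ha := hsol.ode (j+1) (by omega) (by omega) z hz
      have hb := hsol.ode j h1 (by omega) z hz
      have hj : (j+1) - 1 = j := by omega
      rw [hj] at ha
      exact ha.sub hb
    have hform : HasDerivAt (fun w => v₀ j * (x₀ (j+1) - x₀ j) / (x (j+1) w - x j w))
        ((0 * (x (j+1) z - x j z) - v₀ j * (x₀ (j+1) - x₀ j) *
          (pV f (v j z) (v (j+1) z) - pV f (v (j-1) z) (v j z))) / (x (j+1) z - x j z) ^ 2) z :=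
      (hasDerivAt_const z _).div hu hne
    have hev : v j =ᶠ[𝓝 z] fun w => v₀ j * (x₀ (j+1) - x₀ j) / (x (j+1) w - x j w) := by
      filter_upwards [isOpen_Ioo.mem_nhds hz] with w hw
      exact hsol.mass j h1 h2 w ⟨hw.1.le, hw.2⟩
    refine ⟨_, hform.congr_of_eventuallyEq hev, ?_⟩
    intro hl hr
    have hDl : pV f (v (j-1) z) (v j z) ≤ pV f (v j z) (v (j+1) z) :=
      pV_monotone_at_max hf hf0 hfd hl hr
    have hc0 : (0:ℝ) ≤ v₀ j * (x₀ (j+1) - x₀ j) :=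
      mul_nonneg (hv₀nn j h1 h2) (sub_pos.2 (hx₀ j h1 h2)).le
    apply div_nonpos_of_nonpos_of_nonneg
    · nlinarith
    · positivity
  -- the running maximum of the velocities
  have hsne : (Finset.Icc 1 (N-1)).Nonempty := Finset.nonempty_Icc.mpr (by omega)
  set F : ℝ → ℝ := fun r => (Finset.Icc 1 (N-1)).sup' hsne (fun j => v j r) with hFdef
  have hmemN : ∀ j ∈ Finset.Icc 1 (N-1), 1 ≤ j ∧ j < N := by
    intro j hj
    rw [Finset.mem_Icc] at hj
    omega
  have Fcont : ContinuousOn F (Set.Ico 0 t') :=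
    ContinuousOn.finset_sup'_apply hsne (fun j hj => vcont j (hmemN j hj).1 (hmemN j hj).2)
  -- the maximum is non-increasing
  have key : ∀ a b : ℝ, 0 < a → a ≤ b → b < t' → ∀ r ∈ Set.Icc a b, F r ≤ F a := by
    intro a b ha hab hb
    have hsub : Set.Icc a b ⊆ Set.Ico 0 t' :=
      fun w hw => ⟨ha.le.trans hw.1, lt_of_le_of_lt hw.2 hb⟩
    refine image_le_of_liminf_slope_right_le_deriv_boundary (B := fun _ => F a)
      (B' := fun _ => 0) (Fcont.mono hsub)
      le_rfl continuousOn_const (fun z _ => hasDerivWithinAt_const z _ _) ?_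
    -- the liminf of right slopes of F is ≤ 0 everywhere
    intro z hz r hr
    by_contra hcon
    rw [Filter.not_frequently] at hcon
    have hcon' : ∀ᶠ w in 𝓝[>] z, r ≤ slope F z w := hcon.mono fun w hw => not_lt.1 hw
    have hz' : z ∈ Set.Ioo (0:ℝ) t' := ⟨lt_of_lt_of_le ha hz.1, hz.2.trans hb⟩
    have hIoo : Set.Ioo z t' ∈ 𝓝[>] z := Ioo_mem_nhdsGT_of_mem ⟨le_rfl, hz'.2⟩
    have hcomb : ∀ᶠ w in 𝓝[>] z, ∃ j ∈ Finset.Icc 1 (N-1),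
        v j w = F w ∧ w ∈ Set.Ioo z t' ∧ r ≤ slope F z w := by
      filter_upwards [hIoo, hcon'] with w hw1 hw2
      obtain ⟨j, hj, hjw⟩ := Finset.exists_mem_eq_sup' hsne (fun j => v j w)
      exact ⟨j, hj, hjw.symm, hw1, hw2⟩
    have hjex : ∃ j ∈ Finset.Icc 1 (N-1), ∃ᶠ w in 𝓝[>] z,
        v j w = F w ∧ w ∈ Set.Ioo z t' ∧ r ≤ slope F z w := by
      by_contra hno
      push_neg at hno
      have hall : ∀ᶠ w in 𝓝[>] z, ∀ j ∈ Finset.Icc 1 (N-1),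
          ¬(v j w = F w ∧ w ∈ Set.Ioo z t' ∧ r ≤ slope F z w) := by
        rw [Filter.eventually_all_finset]
        intro j hj
        exact (hno j hj).mono fun w hw h => absurd (hw h.1 h.2.1) (not_lt.2 h.2.2)
      obtain ⟨w, ⟨j, hj, hP⟩, hQ⟩ := (hcomb.and hall).exists
      exact hQ j hj hP
    obtain ⟨j, hj, hfreq⟩ := hjex
    obtain ⟨hj1, hjN⟩ := hmemN j hj
    obtain ⟨d, hd, hdsign⟩ := vderiv j hj1 hjN z hz'
    have hzIco : z ∈ Set.Ico (0:ℝ) t' := ⟨hz'.1.le, hz'.2⟩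
    have hle : 𝓝[>] z ≤ 𝓝[Set.Ico 0 t'] z :=
      nhdsWithin_le_of_mem (Filter.mem_of_superset hIoo
        (fun w hw => ⟨(hz'.1.trans hw.1).le, hw.2⟩))
    -- v j z = F z
    have heq : v j z = F z := by
      by_contra hne'
      have hne2 : F z - v j z ≠ 0 := sub_ne_zero.mpr (Ne.symm hne')
      have hgt : Tendsto (fun w => F w - v j w) (𝓝[>] z) (𝓝 (F z - v j z)) :=
        ((Fcont z hzIco).sub (vcont j hj1 hjN z hzIco)).mono_left hle
      have hev5 : ∀ᶠ y in 𝓝 (F z - v j z), y ≠ 0 := isOpen_ne.eventually_mem hne2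
      have hev : ∀ᶠ w in 𝓝[>] z, F w - v j w ≠ 0 := hgt.eventually hev5
      obtain ⟨w, hw1, hw2⟩ := (hfreq.and_eventually hev).exists
      exact hw2 (by rw [hw1.1]; ring)
    -- the derivative is at least r
    have hslope : Tendsto (slope (v j) z) (𝓝[>] z) (𝓝 d) :=
      (hasDerivAt_iff_tendsto_slope.1 hd).mono_left
        (nhdsWithin_mono z (fun w hw => ne_of_gt hw))
    have hge : r ≤ d := by
      by_contra hlt
      push_neg at hlt
      have hev : ∀ᶠ w in 𝓝[>] z, slope (v j) z w < r :=
        hslope.eventually_lt_const hlt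
      obtain ⟨w, hw1, hw2⟩ := (hfreq.and_eventually hev).exists
      have hseq : slope F z w = slope (v j) z w := by
        rw [slope_def_field, slope_def_field, ← hw1.1, ← heq]
      rw [hseq] at hw1
      linarith [hw1.2.2, hw2]
    -- the derivative is nonpositive since `v j z` is maximal
    have hd0 : d ≤ 0 := by
      apply hdsign
      · rcases Nat.eq_or_lt_of_le hj1 with h1 | h1
        · have h0 : j - 1 = 0 := by omega
          rw [h0, hsol.vzero]
          exact vnn z hzIco j (by omega)
        · rw [heq]
          exact Finset.le_sup' (fun k => v k z) (Finset.mem_Icc.mpr (by omega))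
      · rcases Nat.eq_or_lt_of_le hjN with h1 | h1
        · have h0 : j + 1 = N := by omega
          rw [h0, hsol.vN]
          exact vnn z hzIco j (by omega)
        · rw [heq]
          exact Finset.le_sup' (fun k => v k z) (Finset.mem_Icc.mpr (by omega))
    have hr' : (0:ℝ) < r := hr
    linarith
  -- the maximum at any time is at most the initial maximum
  have FleM : ∀ r ∈ Set.Ico (0:ℝ) t', F r ≤ F 0 := by
    intro r hr
    rcases eq_or_lt_of_le hr.1 with h0 | h0
    · rw [← h0]
    · have h1 : ∀ a ∈ Set.Ioc (0:ℝ) r, F r ≤ F a :=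
        fun a ha => key a r ha.1 ha.2 hr.2 r ⟨ha.2, le_rfl⟩
      have h2 : Tendsto F (𝓝[>] 0) (𝓝 (F 0)) :=
        (Fcont 0 ⟨le_rfl, ht'⟩).mono_left
          (nhdsWithin_le_of_mem (Filter.mem_of_superset
            (Ioo_mem_nhdsGT_of_mem ⟨le_rfl, ht'⟩) (fun w hw => ⟨hw.1.le, hw.2⟩)))
      refine ge_of_tendsto h2 ?_
      filter_upwards [Ioc_mem_nhdsGT_of_mem ⟨le_rfl, h0⟩] with a ha using h1 a ha
  set M : ℝ := F 0 with hMdef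
  have hv0init : ∀ j, 1 ≤ j → j < N → v j 0 = v₀ j := by
    intro j h1 h2
    rw [hsol.mass j h1 h2 0 ⟨le_rfl, ht'⟩, hsol.init (j+1) (by omega) (by omega),
      hsol.init j h1 (by omega), mul_div_assoc,
      div_self (ne_of_gt (sub_pos.2 (hx₀ j h1 h2))), mul_one]
  have hMj : ∀ j, 1 ≤ j → j < N → v₀ j ≤ M := by
    intro j h1 h2
    rw [← hv0init j h1 h2]
    exact Finset.le_sup' (fun k => v k 0) (Finset.mem_Icc.mpr (by omega))
  have vleM : ∀ r ∈ Set.Ico (0:ℝ) t', ∀ j, 1 ≤ j → j < N → v j r ≤ M := by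
    intro r hr j h1 h2
    exact le_trans (Finset.le_sup' (fun k => v k r) (Finset.mem_Icc.mpr (by omega))) (FleM r hr)
  -- gap lower bound for intervals with positive initial velocity
  have gapge : ∀ r ∈ Set.Ico (0:ℝ) t', ∀ i, 1 ≤ i → i < N → 0 < v₀ i →
      v₀ i * (x₀ (i+1) - x₀ i) / M ≤ x (i+1) r - x i r := by
    intro r hr i h1 h2 hpos
    have hMpos : 0 < M := lt_of_lt_of_le hpos (hMj i h1 h2)
    have hΔ := xgap r hr i h1 h2
    have h3 := vleM r hr i h1 h2
    rw [hsol.mass i h1 h2 r hr, div_le_iff₀ hΔ] at h3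
    rw [div_le_iff₀ hMpos]
    linarith
  -- the one-sided Lipschitz constant
  set C : ℝ := max 0 ((Finset.Icc 1 (N-1)).sup' hsne
    (fun i => 2*K*M/(v₀ i * (x₀ (i+1) - x₀ i)))) with hCdef
  have hC0 : 0 ≤ C := le_max_left _ _
  -- slope estimate on each interval
  have slope_le : ∀ r ∈ Set.Ico (0:ℝ) t', ∀ i, 1 ≤ i → i < N →
      pV f (v i r) (v (i+1) r) - pV f (v (i-1) r) (v i r) ≤ C * (x (i+1) r - x i r) := by
    intro r hr i h1 h2
    have hΔ := xgap r hr i h1 h2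
    rcases eq_or_lt_of_le (hv₀nn i h1 h2) with hz | hz
    · -- zero initial velocity: the slope is nonpositive
      have hvi : v i r = 0 := by
        rw [hsol.mass i h1 h2 r hr, ← hz, zero_mul, zero_div]
      have hkey : pV f 0 (v (i+1) r) ≤ pV f (v (i-1) r) 0 :=
        pV_zero_mid hf hf0 hfd (vnn r hr (i-1) (by omega)) (vnn r hr (i+1) (by omega))
      rw [hvi]
      nlinarith [mul_nonneg hC0 hΔ.le]
    · -- positive initial velocity: the gap is bounded below
      have hgap0 : (0:ℝ) < x₀ (i+1) - x₀ i := sub_pos.2 (hx₀ i h1 h2)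
      have hmi : 0 < v₀ i * (x₀ (i+1) - x₀ i) := mul_pos hz hgap0
      have hMpos : 0 < M := lt_of_lt_of_le hz (hMj i h1 h2)
      have hg := gapge r hr i h1 h2 hz
      have habs1 := abs_le.1 (abs_pV_le hf hf0 hfd (v i r) (v (i+1) r))
      have habs2 := abs_le.1 (abs_pV_le hf hf0 hfd (v (i-1) r) (v i r))
      have hterm : 2*K*M/(v₀ i * (x₀ (i+1) - x₀ i)) ≤ C :=
        le_trans (Finset.le_sup' (fun k => 2*K*M/(v₀ k * (x₀ (k+1) - x₀ k)))
          (Finset.mem_Icc.mpr (by omega))) (le_max_right _ _)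
      have h2K : (2*(K:ℝ)) ≤ (2*K*M/(v₀ i * (x₀ (i+1) - x₀ i))) * (x (i+1) r - x i r) := by
        have hc : (2*(K:ℝ)) = (2*K*M/(v₀ i * (x₀ (i+1) - x₀ i))) *
            (v₀ i * (x₀ (i+1) - x₀ i) / M) := by
          field_simp
        refine le_of_le_of_eq (le_of_eq hc) rfl |>.trans ?_
        exact mul_le_mul_of_nonneg_left hg (div_nonneg (mul_nonneg (mul_nonneg (by norm_num : (0:ℝ) ≤ 2) K.coe_nonneg) hMpos.le) hmi.le)
      calc pV f (v i r) (v (i+1) r) - pV f (v (i-1) r) (v i r) ≤ 2*(K:ℝ) := by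
            linarith [habs1.2, habs2.1]
      _ ≤ (2*K*M/(v₀ i * (x₀ (i+1) - x₀ i))) * (x (i+1) r - x i r) := h2K
      _ ≤ C * (x (i+1) r - x i r) :=
            mul_le_mul_of_nonneg_right hterm hΔ.le
  -- monotonicity of y ↦ C y - A y t
  have gmono : ∀ r ∈ Set.Ico (0:ℝ) t', ∀ q p : ℝ, q ≤ p →
      C * q - A q r ≤ C * p - A p r := by
    intro r hr q p hqp
    have hXlt : ∀ i, 1 ≤ i → i < N → x i r < x (i+1) r := by
      intro i h1 h2
      linarith [xgap r hr i h1 h2]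
    have hXle : ∀ i j, 1 ≤ i → i ≤ j → j ≤ N → x i r ≤ x j r := by
      intro i j h1 hij hjN
      induction j, hij using Nat.le_induction with
      | base => exact le_rfl
      | succ k hk ih => exact (ih (by omega)).trans (hXlt k (by omega) (by omega)).le
    have stepC : ∀ i, 1 ≤ i → i < N → ∀ y z, x i r ≤ y → y ≤ z → z ≤ x (i+1) r →
        C * y - A y r ≤ C * z - A z r := by
      intro i h1 h2 y z hy hyz hz
      have hΔ := xgap r hr i h1 h2
      have hAy := hAmid r hr i h1 h2 y ⟨hy, hyz.trans hz⟩
      have hAz := hAmid r hr i h1 h2 z ⟨hy.trans hyz, hz⟩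
      have hsl := slope_le r hr i h1 h2
      have hkey : A z r - A y r ≤ C * (z - y) := by
        rw [hAy, hAz, div_sub_div_same]
        have he : (x (i+1) r - z) * pV f (v (i-1) r) (v i r)
              + (z - x i r) * pV f (v i r) (v (i+1) r)
            - ((x (i+1) r - y) * pV f (v (i-1) r) (v i r)
              + (y - x i r) * pV f (v i r) (v (i+1) r))
            = (z - y) * (pV f (v i r) (v (i+1) r) - pV f (v (i-1) r) (v i r)) := by ring
        rw [he, div_le_iff₀ hΔ]
        calc (z - y) * (pV f (v i r) (v (i+1) r) - pV f (v (i-1) r) (v i r))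
            ≤ (z - y) * (C * (x (i+1) r - x i r)) :=
              mul_le_mul_of_nonneg_left hsl (by linarith)
        _ = C * (z - y) * (x (i+1) r - x i r) := by ring
      linarith
    have stepD : ∀ i j, 1 ≤ i → i ≤ j → j ≤ N →
        C * (x i r) - A (x i r) r ≤ C * (x j r) - A (x j r) r := by
      intro i j h1 hij hjN
      induction j, hij using Nat.le_induction with
      | base => exact le_rfl
      | succ k hk ih =>
        exact (ih (by omega)).trans
          (stepC k (by omega) (by omega) _ _ le_rfl (hXlt k (by omega) (by omega)).le le_rfl)
    have locate : ∀ y, x 1 r ≤ y → y ≤ x N r →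
        ∃ i, 1 ≤ i ∧ i < N ∧ x i r ≤ y ∧ y ≤ x (i+1) r := by
      intro y h1 h2
      set P : ℕ → Prop := fun i => x i r ≤ y with hP
      set i := Nat.findGreatest P (N-1) with hi
      have hi1 : 1 ≤ i := Nat.le_findGreatest (by omega) h1
      have hiN : i ≤ N-1 := Nat.findGreatest_le _
      have hPi : P i := Nat.findGreatest_spec (m := 1) (by omega) h1
      refine ⟨i, hi1, by omega, hPi, ?_⟩
      by_cases hiN' : i = N-1
      · have hN' : i + 1 = N := by omega
        rw [hN']
        exact h2
      · have hnP : ¬ P (i+1) := Nat.findGreatest_is_greatest (show Nat.findGreatest P (N-1) < i+1 by omega) (by omega)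
        exact (not_le.1 hnP).le
    have claimL : ∀ y z, y ≤ z → z ≤ x 1 r → C * y - A y r ≤ C * z - A z r := by
      intro y z hyz hz
      rw [hAl r hr y (hyz.trans hz), hAl r hr z hz]
      have : C * y ≤ C * z := mul_le_mul_of_nonneg_left hyz hC0
      linarith
    have claimR : ∀ y z, x N r ≤ y → y ≤ z → C * y - A y r ≤ C * z - A z r := by
      intro y z hy hyz
      rw [hAr r hr y hy, hAr r hr z (hy.trans hyz)]
      have : C * y ≤ C * z := mul_le_mul_of_nonneg_left hyz hC0
      linarith
    have down : ∀ y, x 1 r ≤ y → y ≤ x N r → ∀ j, 1 ≤ j → j ≤ N → x j r ≤ y →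
        C * (x j r) - A (x j r) r ≤ C * y - A y r := by
      intro y hy1 hyN j hj1 hjN hjy
      obtain ⟨i, hi1, hiN, hil, hir⟩ := locate y hy1 hyN
      by_cases hji : j ≤ i
      · exact (stepD j i hj1 hji (by omega)).trans (stepC i hi1 hiN _ _ le_rfl hil hir)
      · have hij1 : i + 1 ≤ j := by omega
        have hxx : x (i+1) r ≤ x j r := hXle (i+1) j (by omega) hij1 hjN
        have heqy : y = x j r := le_antisymm (hir.trans hxx) hjy
        rw [heqy]
    by_cases hp1 : p ≤ x 1 r
    · exact claimL q p hqp hp1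
    push_neg at hp1
    by_cases hqN : x N r ≤ q
    · exact claimR q p hqN hqp
    push_neg at hqN
    have h1N : x 1 r ≤ x N r := hXle 1 N le_rfl (by omega) le_rfl
    set q' := max q (x 1 r) with hq'
    set p' := min p (x N r) with hp'
    have hq'1 : x 1 r ≤ q' := le_max_right _ _
    have hq'N : q' ≤ x N r := max_le hqN.le h1N
    have hp'1 : x 1 r ≤ p' := le_min hp1.le h1N
    have hp'N : p' ≤ x N r := min_le_right _ _
    have hqq' : C * q - A q r ≤ C * q' - A q' r := by
      by_cases h : q ≤ x 1 r
      · have hq'' : q' = x 1 r := max_eq_right h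
        rw [hq'']
        exact claimL q _ h le_rfl
      · have hq'' : q' = q := max_eq_left (le_of_not_ge h)
        rw [hq'']
    have hpp' : C * p' - A p' r ≤ C * p - A p r := by
      by_cases h : x N r ≤ p
      · have hp'' : p' = x N r := min_eq_right h
        rw [hp'']
        exact claimR (x N r) p le_rfl h
      · have hp'' : p' = p := min_eq_left (le_of_not_ge h)
        rw [hp'']
    have hq'p' : q' ≤ p' := max_le (le_min hqp hqN.le) (le_min hp1.le h1N)
    obtain ⟨i, hi1, hiN, hil, hir⟩ := locate q' hq'1 hq'N
    have hmid : C * q' - A q' r ≤ C * p' - A p' r := by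
      by_cases hcase : p' ≤ x (i+1) r
      · exact stepC i hi1 hiN q' p' hil hq'p' hcase
      · push_neg at hcase
        exact (stepC i hi1 hiN q' (x (i+1) r) hil hir le_rfl).trans
          (down p' hp'1 hp'N (i+1) (by omega) (by omega) hcase.le)
    linarith
  -- conclusion
  refine ⟨C, hC0, ?_⟩
  intro t ht p q
  rcases le_total q p with h | h
  · have hg := gmono t ht q p h
    have h1 : A p t - A q t ≤ C * (p - q) := by linarith
    have h2 : (0:ℝ) ≤ p - q := sub_nonneg.2 h
    calc (A p t - A q t) * (p - q) ≤ C * (p - q) * (p - q) :=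
          mul_le_mul_of_nonneg_right h1 h2
    _ = C * (p - q) ^ 2 := by ring
  · have hg := gmono t ht p q h
    have h1 : A q t - A p t ≤ C * (q - p) := by linarith
    have h2 : (0:ℝ) ≤ q - p := sub_nonneg.2 h
    have h3 : (A q t - A p t) * (q - p) ≤ C * (q - p) * (q - p) :=
      mul_le_mul_of_nonneg_right h1 h2
    calc (A p t - A q t) * (p - q) = (A q t - A p t) * (q - p) := by ring
    _ ≤ C * (q - p) * (q - p) := h3
    _ = C * (p - q) ^ 2 := by ring
end

section
/- (Entropic velocity inequality.) Let (x^i)_{i=1}^N, (v^i)_{i=1}^{N−1} be a solution of the particle system on (0, t'). Then for every t ∈ (0, t'), every k ∈ ℝ and every nonnegative θ ∈ C_c^∞(ℝ): ∫_ℝ θ(x) sgn(v(x, t) − k) ∂_x A(x, t) dx ≥ − ∫_ℝ θ'(x) sgn(v(x, t) − k) (A(x, t) − a(k)) dx, where ∂_x A(·, t) denotes the (almost everywhere defined) spatial derivative of the piecewise linear function A(·, t), and sgn is the sign function with sgn(0) = 0. -/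
open MeasureTheory Set Filter
open scoped ENNReal NNReal

lemma sign_lt_imp {u w : ℝ} (h : Real.sign u < Real.sign w) : u ≤ 0 ∧ 0 ≤ w := by
  rcases lt_trichotomy u 0 with hu|hu|hu <;> rcases lt_trichotomy w 0 with hw|hw|hw
  all_goals
    first
      | exact ⟨by linarith, by linarith⟩
      | (exfalso
         simp only [Real.sign_of_pos, Real.sign_of_neg, Real.sign_zero, hu, hw] at h
         norm_num at h)

lemma piece (θ : ℝ → ℝ) (hθ : ContDiff ℝ (⊤:ℕ∞) θ) (Af W : ℝ → ℝ) (s m b ak p q : ℝ)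
    (hpq : p < q) (hA : ∀ y ∈ Icc p q, Af y = m * y + b)
    (hW : ∀ y ∈ Ioo p q, Real.sign (W y) = s) :
    IntervalIntegrable (fun y => deriv θ y * Real.sign (W y) * (Af y - ak)) volume p q ∧
    IntervalIntegrable (fun y => θ y * Real.sign (W y) * deriv Af y) volume p q ∧
    (∫ y in p..q, deriv θ y * Real.sign (W y) * (Af y - ak)) +
      (∫ y in p..q, θ y * Real.sign (W y) * deriv Af y) =
      s * (θ q * (Af q - ak) - θ p * (Af p - ak)) := by
  have hθd : Differentiable ℝ θ := hθ.differentiable (by simp)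
  have hθc' : Continuous (deriv θ) := hθ.continuous_deriv (by exact_mod_cast le_top)
  have hAd : ∀ y ∈ Ioo p q, deriv Af y = m := by
    intro y hy
    have hev : Af =ᶠ[nhds y] fun z => m * z + b := by
      filter_upwards [Ioo_mem_nhds hy.1 hy.2] with z hz using hA z (Ioo_subset_Icc_self hz)
    rw [hev.deriv_eq]
    have : HasDerivAt (fun z => m * z + b) m y := by
      simpa using ((hasDerivAt_id y).const_mul m).add_const b
    exact this.deriv
  set g₁ : ℝ → ℝ := fun y => s * (deriv θ y * (m * y + b - ak)) with hg₁
  set g₂ : ℝ → ℝ := fun y => s * (θ y * m) with hg₂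
  have hg₁c : Continuous g₁ := by fun_prop
  have hg₂c : Continuous g₂ := by fun_prop
  have hne : ∀ᵐ y : ℝ, y ≠ q := by
    refine (MeasureTheory.compl_mem_ae_iff.mpr (measure_singleton q))
  have key : ∀ y ∈ Ioc p q, y ≠ q →
      (deriv θ y * Real.sign (W y) * (Af y - ak) = g₁ y ∧
       θ y * Real.sign (W y) * deriv Af y = g₂ y) := by
    intro y hy hyq
    have hyo : y ∈ Ioo p q := ⟨hy.1, lt_of_le_of_ne hy.2 hyq⟩
    constructor
    · rw [hW y hyo, hA y (Ioo_subset_Icc_self hyo)]; ring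
    · rw [hW y hyo, hAd y hyo]; ring
  have ae1 : ∀ᵐ y ∂(volume : Measure ℝ), y ∈ uIoc p q →
      deriv θ y * Real.sign (W y) * (Af y - ak) = g₁ y := by
    filter_upwards [hne] with y hyq hym
    rw [uIoc_of_le hpq.le] at hym
    exact (key y hym hyq).1
  have ae2 : ∀ᵐ y ∂(volume : Measure ℝ), y ∈ uIoc p q →
      θ y * Real.sign (W y) * deriv Af y = g₂ y := by
    filter_upwards [hne] with y hyq hym
    rw [uIoc_of_le hpq.le] at hym
    exact (key y hym hyq).2
  have int1 : IntervalIntegrable (fun y => deriv θ y * Real.sign (W y) * (Af y - ak)) volume p q := by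
    rw [intervalIntegrable_iff, uIoc_of_le hpq.le]
    refine (hg₁c.integrableOn_Ioc).congr_fun_ae ?_
    filter_upwards [ae_restrict_mem measurableSet_Ioc, (ae_mono Measure.restrict_le_self) hne]
      with y hy hyq
    exact ((key y hy hyq).1).symm
  have int2 : IntervalIntegrable (fun y => θ y * Real.sign (W y) * deriv Af y) volume p q := by
    rw [intervalIntegrable_iff, uIoc_of_le hpq.le]
    refine (hg₂c.integrableOn_Ioc).congr_fun_ae ?_
    filter_upwards [ae_restrict_mem measurableSet_Ioc, (ae_mono Measure.restrict_le_self) hne]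
      with y hy hyq
    exact ((key y hy hyq).2).symm
  refine ⟨int1, int2, ?_⟩
  rw [intervalIntegral.integral_congr_ae ae1, intervalIntegral.integral_congr_ae ae2]
  rw [hg₁, hg₂, intervalIntegral.integral_const_mul, intervalIntegral.integral_const_mul,
    ← mul_add]
  have hi1 : IntervalIntegrable (fun y => deriv θ y * (m * y + b - ak)) volume p q := by
    apply Continuous.intervalIntegrable; fun_prop
  have hi2 : IntervalIntegrable (fun y => θ y * m) volume p q := by
    apply Continuous.intervalIntegrable; fun_prop
  have hsplit : (∫ y in p..q, deriv θ y * (m * y + b - ak)) + (∫ y in p..q, θ y * m)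
      = ∫ y in p..q, (deriv θ y * (m * y + b - ak) + θ y * m) :=
    (intervalIntegral.integral_add hi1 hi2).symm
  have heq : (∫ y in p..q, (deriv θ y * (m * y + b - ak) + θ y * m))
      = θ q * (m * q + b - ak) - θ p * (m * p + b - ak) := by
    refine intervalIntegral.integral_eq_sub_of_hasDerivAt (f := fun y => θ y * (m * y + b - ak))
      ?_ (hi1.add hi2)
    intro y _
    have h1 : HasDerivAt θ (deriv θ y) y := (hθd y).hasDerivAt
    have h2 : HasDerivAt (fun z => m * z + b - ak) m y := by
      simpa using (((hasDerivAt_id y).const_mul m).add_const b).sub_const ak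
    exact h1.mul h2
  rw [hsplit, heq, hA q (right_mem_Icc.mpr hpq.le), hA p (left_mem_Icc.mpr hpq.le)]

lemma aF_bound (f : ℝ → ℝ) (K : ℝ≥0) (hf : LipschitzWith K f) (hf0 : f 0 = 0) (v : ℝ) :
    |aF f v| ≤ max (K:ℝ) |deriv f 0| := by
  unfold aF
  split_ifs with h
  · exact le_max_right _ _
  · refine le_trans ?_ (le_max_left _ _)
    rw [abs_div]
    rw [div_le_iff₀ (abs_pos.mpr h)]
    have := hf.dist_le_mul v 0
    simpa [hf0, Real.dist_eq] using this

lemma key_sign (f : ℝ → ℝ) (K : ℝ≥0) (hf : LipschitzWith K f) (hf0 : f 0 = 0)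
    (a b k : ℝ) :
    0 ≤ (Real.sign (a - k) - Real.sign (b - k)) * (pV f a b - aF f k) := by
  have hbdd : ∀ c d : ℝ, BddAbove (aF f '' Icc c d) ∧ BddBelow (aF f '' Icc c d) := by
    intro c d
    constructor
    · refine ⟨max (K:ℝ) |deriv f 0|, ?_⟩
      rintro _ ⟨y, -, rfl⟩
      exact (abs_le.mp (aF_bound f K hf hf0 y)).2
    · refine ⟨-(max (K:ℝ) |deriv f 0|), ?_⟩
      rintro _ ⟨y, -, rfl⟩
      exact (abs_le.mp (aF_bound f K hf hf0 y)).1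
  rcases lt_trichotomy (Real.sign (a - k)) (Real.sign (b - k)) with h|h|h
  · -- a ≤ k ≤ b, pV = sInf ≤ aF k
    obtain ⟨ha, hb⟩ := sign_lt_imp h
    have hab : a ≤ b := by linarith
    have hk : k ∈ Icc a b := ⟨by linarith, by linarith⟩
    have hle : pV f a b ≤ aF f k := by
      rw [pV, if_pos hab]
      exact csInf_le (hbdd a b).2 ⟨k, hk, rfl⟩
    nlinarith [h]
  · simp [h]
  · obtain ⟨hb, ha⟩ := sign_lt_imp h
    have hk : k ∈ Icc b a := ⟨by linarith, by linarith⟩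
    have hba : b ≤ a := by linarith
    have hge : aF f k ≤ pV f a b := by
      rcases eq_or_lt_of_le hba with heq|hlt
      · exfalso
        have h1 : a - k ≤ 0 := heq ▸ hb
        have h2 : a = k := by linarith
        rw [heq, h2] at h
        simp at h
      · rw [pV, if_neg (not_le.mpr hlt)]
        exact le_csSup (hbdd b a).1 ⟨k, hk, rfl⟩
    nlinarith [h]

lemma abel_sum (σ Φp : ℕ → ℝ) (n : ℕ) :
    ∑ i ∈ Finset.range (n+1), σ i * (Φp (i+1) - Φp i)
      = σ n * Φp (n+1) - σ 0 * Φp 0 + ∑ i ∈ Finset.range n, (σ i - σ (i+1)) * Φp (i+1) := by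
  induction n with
  | zero => simp; ring
  | succ m ih =>
    rw [Finset.sum_range_succ, ih, Finset.sum_range_succ]
    ring

/-- **Entropic velocity inequality.** For every `t ∈ (0, tʹ)`, `k ∈ ℝ` and
nonnegative `θ ∈ C_c^∞(ℝ)`:
`∫ θ sgn(v − k) ∂ₓA dx ≥ −∫ θʹ sgn(v − k) (A − a(k)) dx`. -/
theorem entropic_velocity_inequality
    (f : ℝ → ℝ) (K : ℝ≥0) (hf : LipschitzWith K f)
    (hf0 : f 0 = 0) (hfd : DifferentiableAt ℝ f 0)
    (N : ℕ) (hN : 2 ≤ N) (x₀ v₀ : ℕ → ℝ)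
    (hx₀ : ∀ i, 1 ≤ i → i < N → x₀ i < x₀ (i+1))
    (hv₀nn : ∀ i, 1 ≤ i → i < N → 0 ≤ v₀ i)
    (hv₀0 : v₀ 0 = 0) (hv₀N : v₀ N = 0)
    (t' : ℝ) (ht' : 0 < t') (x v : ℕ → ℝ → ℝ)
    (hsol : IsParticleSol f N x₀ v₀ t' x v)
    (w : ℝ → ℝ → ℝ)
    (hwl : ∀ t ∈ Set.Ico (0:ℝ) t', ∀ y, y < x 1 t → w y t = 0)
    (hwr : ∀ t ∈ Set.Ico (0:ℝ) t', ∀ y, x N t < y → w y t = 0)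
    (hwmid : ∀ t ∈ Set.Ico (0:ℝ) t', ∀ i, 1 ≤ i → i < N →
      ∀ y ∈ Set.Ioo (x i t) (x (i+1) t), w y t = v i t)
    (A : ℝ → ℝ → ℝ)
    (hAl : ∀ t ∈ Set.Ico (0:ℝ) t', ∀ y, y ≤ x 1 t → A y t = pV f 0 (v 1 t))
    (hAr : ∀ t ∈ Set.Ico (0:ℝ) t', ∀ y, x N t ≤ y → A y t = pV f (v (N-1) t) 0)
    (hAmid : ∀ t ∈ Set.Ico (0:ℝ) t', ∀ i, 1 ≤ i → i < N →
      ∀ y ∈ Set.Icc (x i t) (x (i+1) t),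
        A y t = ((x (i+1) t - y) * pV f (v (i-1) t) (v i t)
          + (y - x i t) * pV f (v i t) (v (i+1) t)) / (x (i+1) t - x i t))
    :
    ∀ t ∈ Set.Ioo (0:ℝ) t', ∀ k : ℝ, ∀ θ : ℝ → ℝ,
      ContDiff ℝ (⊤ : ℕ∞) θ → HasCompactSupport θ → (∀ y, 0 ≤ θ y) →
      -(∫ y, deriv θ y * Real.sign (w y t - k) * (A y t - aF f k)) ≤
        ∫ y, θ y * Real.sign (w y t - k) * deriv (fun z => A z t) y := by
  intro t ht k θ hθ hθc hθnn
  have htI : t ∈ Set.Ico (0:ℝ) t' := ⟨ht.1.le, ht.2⟩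
  have hN1 : 1 ≤ N := by omega
  -- choose R
  obtain ⟨R₀, hR₀⟩ := hθc.isBounded.subset_closedBall 0
  rw [Real.closedBall_eq_Icc, zero_sub, zero_add] at hR₀
  set M : ℝ := max R₀ (max (|x 1 t|) (|x N t|)) with hMdef
  have hMR₀ : R₀ ≤ M := le_max_left _ _
  have hM1 : |x 1 t| ≤ M := le_trans (le_max_left _ _) (le_max_right _ _)
  have hMN : |x N t| ≤ M := le_trans (le_max_right _ _) (le_max_right _ _)
  set R : ℝ := M + 1 with hRdef
  have hsupp : tsupport θ ⊆ Set.Icc (-R) R :=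
    hR₀.trans (Set.Icc_subset_Icc (by linarith) (by linarith))
  have hRx1 : -R < x 1 t := by have := neg_abs_le (x 1 t); linarith
  have hRxN : x N t < R := by have := le_abs_self (x N t); linarith
  have hvan : ∀ y : ℝ, y ∉ Set.Icc (-R) R → θ y = 0 ∧ deriv θ y = 0 := by
    intro y hy
    have hyt : y ∉ tsupport θ := fun hc => hy (hsupp hc)
    refine ⟨image_eq_zero_of_notMem_tsupport hyt, ?_⟩
    by_contra hc
    exact hyt (support_deriv_subset (by simpa [Function.mem_support] using hc))
  have hθR : θ R = 0 := by
    apply image_eq_zero_of_notMem_tsupport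
    intro hc
    have := (hR₀ hc).2
    linarith
  have hθmR : θ (-R) = 0 := by
    apply image_eq_zero_of_notMem_tsupport
    intro hc
    have := (hR₀ hc).1
    linarith
  -- partition
  set p : ℕ → ℝ := fun i => if i = 0 then -R else if i = N + 1 then R else x i t with hpdef
  have hp0 : p 0 = -R := by simp [hpdef]
  have hpN1 : p (N+1) = R := by simp [hpdef]
  have hpmid : ∀ i, 1 ≤ i → i ≤ N → p i = x i t := by
    intro i h1 h2
    simp only [hpdef]
    rw [if_neg (by omega), if_neg (by omega)]
  have horder : ∀ i, 1 ≤ i → i < N → x i t < x (i+1) t := fun i h1 h2 => hsol.order t ht i h1 h2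
  have hplt : ∀ i, i ≤ N → p i < p (i+1) := by
    intro i hi
    rcases Nat.eq_zero_or_pos i with h0 | h1
    · subst h0
      rw [hp0, hpmid 1 le_rfl hN1]
      exact hRx1
    · by_cases hiN : i = N
      · subst hiN
        rw [hpmid i (by omega) (by omega), hpN1] at *
        exact hRxN
      · rw [hpmid i h1 hi, hpmid (i+1) (by omega) (by omega)]
        exact horder i h1 (by omega)
  set σ : ℕ → ℝ := fun i => Real.sign (v i t - k) with hσdef
  set Φp : ℕ → ℝ := fun i => θ (p i) * (A (p i) t - aF f k) with hΦpdef
  -- sign of w on each open interval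
  have hWi : ∀ i, i ≤ N → ∀ y ∈ Set.Ioo (p i) (p (i+1)), Real.sign (w y t - k) = σ i := by
    intro i hi y hy
    rcases Nat.eq_zero_or_pos i with h0 | h1
    · subst h0
      rw [hpmid 1 le_rfl hN1] at hy
      rw [hwl t htI y hy.2, hσdef]
      simp only [hsol.vzero t]
    · by_cases hiN : i = N
      · subst hiN
        rw [hpmid i (by omega) (by omega)] at hy
        rw [hwr t htI y hy.1, hσdef]
        simp only [hsol.vN t]
      · rw [hpmid i h1 hi, hpmid (i+1) (by omega) (by omega)] at hy
        rw [hwmid t htI i h1 (by omega) y hy]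
  -- affine structure of A on each closed interval
  have hMB : ∀ i, i ≤ N → ∃ m b : ℝ, ∀ y ∈ Set.Icc (p i) (p (i+1)),
      A y t = m * y + b := by
    intro i hi
    rcases Nat.eq_zero_or_pos i with h0 | h1
    · subst h0
      refine ⟨0, pV f 0 (v 1 t), ?_⟩
      intro y hy
      rw [hp0, hpmid 1 le_rfl hN1] at hy
      rw [hAl t htI y hy.2]
      ring
    · by_cases hiN : i = N
      · subst hiN
        refine ⟨0, pV f (v (i-1) t) 0, ?_⟩
        intro y hy
        rw [hpmid i (by omega) (by omega), hpN1] at hy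
        rw [hAr t htI y hy.1]
        ring
      · have hlt : i < N := by omega
        have hΔ : x (i+1) t - x i t ≠ 0 := sub_ne_zero.mpr (horder i h1 hlt).ne'
        refine ⟨(pV f (v i t) (v (i+1) t) - pV f (v (i-1) t) (v i t)) / (x (i+1) t - x i t),
          (x (i+1) t * pV f (v (i-1) t) (v i t) - x i t * pV f (v i t) (v (i+1) t)) / (x (i+1) t - x i t), ?_⟩
        intro y hy
        rw [hpmid i h1 hi, hpmid (i+1) (by omega) (by omega)] at hy
        rw [hAmid t htI i h1 hlt y hy]
        field_simp
        ring
  -- value of A at particle positions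
  have hAv : ∀ j, 1 ≤ j → j ≤ N → A (x j t) t = pV f (v (j-1) t) (v j t) := by
    intro j h1 hj
    by_cases hjN : j = N
    · subst hjN
      rw [hAr t htI (x j t) le_rfl, hsol.vN t]
    · have hlt : j < N := by omega
      have hord := horder j h1 hlt
      have hΔ : x (j+1) t - x j t ≠ 0 := sub_ne_zero.mpr hord.ne'
      rw [hAmid t htI j h1 hlt (x j t) ⟨le_rfl, hord.le⟩]
      field_simp
      ring
  -- apply the per-piece lemma
  have hpiece : ∀ i, i ≤ N →
      IntervalIntegrable (fun y => deriv θ y * Real.sign (w y t - k) * (A y t - aF f k))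
        volume (p i) (p (i+1)) ∧
      IntervalIntegrable (fun y => θ y * Real.sign (w y t - k) * deriv (fun z => A z t) y)
        volume (p i) (p (i+1)) ∧
      (∫ y in p i..p (i+1), deriv θ y * Real.sign (w y t - k) * (A y t - aF f k)) +
        (∫ y in p i..p (i+1), θ y * Real.sign (w y t - k) * deriv (fun z => A z t) y) =
        σ i * (Φp (i+1) - Φp i) := by
    intro i hi
    obtain ⟨m, b, hmb⟩ := hMB i hi
    have := piece θ hθ (fun z => A z t) (fun y => w y t - k) (σ i) m b (aF f k)
      (p i) (p (i+1)) (hplt i hi) hmb (hWi i hi)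
    exact this
  -- whole-line integrals as sums of interval integrals
  have hT1 : (∫ y, deriv θ y * Real.sign (w y t - k) * (A y t - aF f k))
      = ∑ i ∈ Finset.range (N+1),
        ∫ y in p i..p (i+1), deriv θ y * Real.sign (w y t - k) * (A y t - aF f k) := by
    rw [intervalIntegral.sum_integral_adjacent_intervals (fun i hi => (hpiece i (by omega)).1)]
    rw [hp0, hpN1, intervalIntegral.integral_of_le (by linarith [abs_nonneg (x 1 t), hM1] : -R ≤ R)]
    rw [← MeasureTheory.integral_Icc_eq_integral_Ioc]
    rw [MeasureTheory.setIntegral_eq_integral_of_forall_compl_eq_zero]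
    intro y hy
    rw [(hvan y hy).2]
    ring
  have hT2 : (∫ y, θ y * Real.sign (w y t - k) * deriv (fun z => A z t) y)
      = ∑ i ∈ Finset.range (N+1),
        ∫ y in p i..p (i+1), θ y * Real.sign (w y t - k) * deriv (fun z => A z t) y := by
    rw [intervalIntegral.sum_integral_adjacent_intervals (fun i hi => (hpiece i (by omega)).2.1)]
    rw [hp0, hpN1, intervalIntegral.integral_of_le (by linarith [abs_nonneg (x 1 t), hM1] : -R ≤ R)]
    rw [← MeasureTheory.integral_Icc_eq_integral_Ioc]
    rw [MeasureTheory.setIntegral_eq_integral_of_forall_compl_eq_zero]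
    intro y hy
    rw [(hvan y hy).1]
    ring
  -- combine
  have hsum : (∫ y, deriv θ y * Real.sign (w y t - k) * (A y t - aF f k)) +
      (∫ y, θ y * Real.sign (w y t - k) * deriv (fun z => A z t) y)
      = ∑ i ∈ Finset.range (N+1), σ i * (Φp (i+1) - Φp i) := by
    rw [hT1, hT2, ← Finset.sum_add_distrib]
    refine Finset.sum_congr rfl ?_
    intro i hi
    exact (hpiece i (by simpa using Nat.lt_succ_iff.mp (Finset.mem_range.mp hi))).2.2
  have hΦpN1 : Φp (N+1) = 0 := by rw [hΦpdef]; simp only [hpN1, hθR]; ring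
  have hΦp0 : Φp 0 = 0 := by rw [hΦpdef]; simp only [hp0, hθmR]; ring
  have hterm : ∀ i ∈ Finset.range N, 0 ≤ (σ i - σ (i+1)) * Φp (i+1) := by
    intro i hi
    have hiN : i < N := Finset.mem_range.mp hi
    have hp1 : p (i+1) = x (i+1) t := hpmid (i+1) (by omega) (by omega)
    have hA1 : A (x (i+1) t) t = pV f (v i t) (v (i+1) t) := by
      have := hAv (i+1) (by omega) (by omega)
      simpa using this
    have hkey := key_sign f K hf hf0 (v i t) (v (i+1) t) k
    have hΦval : Φp (i+1) = θ (x (i+1) t) * (pV f (v i t) (v (i+1) t) - aF f k) := by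
      rw [hΦpdef]; simp only [hp1, hA1]
    rw [hΦval, hσdef]
    have hθpos := hθnn (x (i+1) t)
    nlinarith [mul_nonneg hkey hθpos]
  have hS : 0 ≤ ∑ i ∈ Finset.range (N+1), σ i * (Φp (i+1) - Φp i) := by
    rw [abel_sum σ Φp N, hΦpN1, hΦp0]
    have := Finset.sum_nonneg hterm
    linarith
  linarith [hsum, hS]
end

section
/- If f : ℝ → ℝ is differentiable with f(0) = 0 and f' is Lipschitz with constant L, then the function a defined by a(v) := f(v)/v for v ≠ 0 and a(0) := f'(0) is Lipschitz on ℝ with constant L/2. -/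
open MeasureTheory Set Filter intervalIntegral
open scoped ENNReal NNReal

/-- If `f : ℝ → ℝ` is differentiable with `f(0) = 0` and `f'` is Lipschitz
with constant `L`, then `a(v) = f(v)/v` (with `a(0) = f'(0)`) is Lipschitz with constant `L/2`. -/
theorem aF_lipschitz (f : ℝ → ℝ) (hf : Differentiable ℝ f) (hf0 : f 0 = 0)
    (L : ℝ≥0) (hL : LipschitzWith L (deriv f)) :
    LipschitzWith (L / 2) (aF f) := by
  have hc : Continuous (deriv f) := hL.continuous
  have key : ∀ v : ℝ, aF f v = ∫ t in (0:ℝ)..1, deriv f (t * v) := by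
    intro v
    by_cases hv : v = 0
    · simp [aF, hv]
    · rw [aF, if_neg hv, integral_comp_mul_right (deriv f) hv]
      rw [zero_mul, one_mul,
        integral_deriv_eq_sub (fun x _ => hf x) (hc.intervalIntegrable 0 v), hf0, sub_zero]
      simp [div_eq_inv_mul]
  apply LipschitzWith.of_dist_le_mul
  intro v w
  rw [key v, key w, Real.dist_eq, Real.dist_eq]
  have hint : ∀ u : ℝ, IntervalIntegrable (fun t => deriv f (t * u)) volume 0 1 :=
    fun u => (hc.comp (continuous_id.mul continuous_const)).intervalIntegrable 0 1
  rw [← integral_sub (hint v) (hint w)]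
  have h1 : |∫ t in (0:ℝ)..1, (deriv f (t * v) - deriv f (t * w))|
      ≤ ∫ t in (0:ℝ)..1, L * t * |v - w| := by
    calc |∫ t in (0:ℝ)..1, (deriv f (t * v) - deriv f (t * w))|
        ≤ ∫ t in (0:ℝ)..1, |deriv f (t * v) - deriv f (t * w)| := by
          simpa [Real.norm_eq_abs] using
            intervalIntegral.norm_integral_le_integral_norm
              (f := fun t => deriv f (t * v) - deriv f (t * w)) (zero_le_one)
      _ ≤ ∫ t in (0:ℝ)..1, L * t * |v - w| := by
          apply integral_mono_on zero_le_one (((hint v).sub (hint w)).abs)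
          · exact (((continuous_const.mul continuous_id).mul continuous_const).intervalIntegrable 0 1)
          · intro t ht
            calc |deriv f (t * v) - deriv f (t * w)| ≤ L * |t * v - t * w| := by
                  simpa [Real.dist_eq] using hL.dist_le_mul (t * v) (t * w)
              _ = L * t * |v - w| := by
                  rw [← mul_sub, abs_mul, abs_of_nonneg ht.1]; ring
  refine h1.trans ?_
  have : ∫ t in (0:ℝ)..1, (L : ℝ) * t * |v - w| = (L : ℝ) * |v - w| / 2 := by
    rw [show (fun t => (L:ℝ) * t * |v - w|) = fun t => ((L:ℝ) * |v - w|) * t by ext t; ring]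
    rw [intervalIntegral.integral_const_mul, integral_id]
    norm_num
    ring
  rw [this, NNReal.coe_div]
  exact le_of_eq (by push_cast; ring)
end

section
/- (Forward flow for one-sided Lipschitz velocity fields.) Let T > 0 and let b : ℝ × [0, T] → ℝ be bounded, continuous, and one-sided Lipschitz in space with a uniform constant C ≥ 0, i.e. (b(x, t) − b(y, t))(x − y) ≤ C (x − y)² for all x, y ∈ ℝ and all t ∈ [0, T]. Then: (i) for every (x, s) ∈ ℝ × [0, T] there exists a unique continuously differentiable function t ↦ X_t(x, s) on [s, T] with X_s(x, s) = x and (d/dt) X_t(x, s) = b(X_t(x, s), t) for all t ∈ (s, T); (ii) the map (x, s, t) ↦ X_t(x, s) is Lipschitz on ℝ × {(s, t) : 0 ≤ s ≤ t ≤ T}; (iii) X_t(X_r(x, s), r) = X_t(x, s) for all 0 ≤ s ≤ r ≤ t ≤ T and all x ∈ ℝ. -/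
open MeasureTheory Set Filter
open scoped ENNReal NNReal

open scoped Topology

/-- One-sided Grönwall estimate for the squared difference of two functions. -/
lemma sq_gronwall {s T C E : ℝ} {g1 g2 d1 d2 : ℝ → ℝ}
    (hc1 : ContinuousOn g1 (Set.Icc s T)) (hc2 : ContinuousOn g2 (Set.Icc s T))
    (h1 : ∀ t ∈ Set.Ico s T, HasDerivWithinAt g1 (d1 t) (Set.Ici t) t)
    (h2 : ∀ t ∈ Set.Ico s T, HasDerivWithinAt g2 (d2 t) (Set.Ici t) t)
    (hbd : ∀ t ∈ Set.Ico s T, (g1 t - g2 t) * (d1 t - d2 t) ≤ C * (g1 t - g2 t)^2 + E) :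
    ∀ t ∈ Set.Icc s T, (g1 t - g2 t)^2 ≤
      gronwallBound ((g1 s - g2 s)^2) (2*C) (2*E) (t - s) := by
  set f : ℝ → ℝ := fun t => (g1 t - g2 t)^2 with hf
  set f' : ℝ → ℝ := fun t => 2*(g1 t - g2 t)*(d1 t - d2 t) with hf'
  have hder : ∀ x ∈ Set.Ico s T, HasDerivWithinAt f (f' x) (Set.Ici x) x := by
    intro x hx
    have D := ((h1 x hx).sub (h2 x hx)).pow 2
    simpa [f, f', Pi.pow_def, Pi.sub_def, pow_one, mul_comm, mul_assoc, mul_left_comm] using D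
  refine le_gronwallBound_of_liminf_deriv_right_le (f' := f')
    ((hc1.sub hc2).pow 2) (fun x hx r hr => ?_) le_rfl (fun x hx => ?_)
  · have hslope : Filter.Tendsto (slope f x) (𝓝[>] x) (𝓝 (f' x)) := by
      have := (hasDerivWithinAt_iff_tendsto_slope).1 (hder x hx)
      rwa [Set.Ici_sdiff_left] at this
    have hev : ∀ᶠ z in 𝓝[>] x, slope f x z < r :=
      hslope.eventually (Filter.Tendsto.eventually_lt_const hr tendsto_id) |>.mono (fun z hz => hz)
    refine (hev.mono fun z hz => ?_).frequently
    simpa [slope_def_field, div_eq_inv_mul] using hz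
  · have := hbd x hx
    simp only [f', f]
    nlinarith [this]


noncomputable def infConv (b : ℝ → ℝ → ℝ) (c : ℝ) (x t : ℝ) : ℝ :=
  ⨅ p : ℝ × ℝ, (b p.1 p.2 + c * dist (x, t) p)

section infConv
variable {b : ℝ → ℝ → ℝ} {M : ℝ} (hM : ∀ x t, |b x t| ≤ M) {c : ℝ} (hc : 0 ≤ c)

include hM hc in
lemma infConv_bddBelow (q : ℝ × ℝ) :
    BddBelow (Set.range fun p : ℝ × ℝ => b p.1 p.2 + c * dist q p) := by
  refine ⟨-M, fun y hy => ?_⟩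
  obtain ⟨p, rfl⟩ := hy
  have h1 := (abs_le.1 (hM p.1 p.2)).1
  have h2 : 0 ≤ c * dist q p := mul_nonneg hc dist_nonneg
  show -M ≤ b p.1 p.2 + c * dist q p
  linarith

include hM hc in
lemma infConv_le (x t : ℝ) : infConv b c x t ≤ b x t := by
  have := ciInf_le (infConv_bddBelow hM hc (x, t)) (x, t)
  simpa [infConv] using this

include hM hc in
lemma neg_le_infConv (x t : ℝ) : -M ≤ infConv b c x t := by
  refine le_ciInf fun p => ?_
  have h1 := (abs_le.1 (hM p.1 p.2)).1
  have h2 : 0 ≤ c * dist (x, t) p := mul_nonneg hc dist_nonneg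
  linarith

include hM hc in
lemma infConv_lip (q q' : ℝ × ℝ) :
    |infConv b c q.1 q.2 - infConv b c q'.1 q'.2| ≤ c * dist q q' := by
  have key : ∀ u v : ℝ × ℝ, infConv b c u.1 u.2 ≤ infConv b c v.1 v.2 + c * dist u v := by
    intro u v
    rw [← sub_le_iff_le_add]
    refine le_ciInf fun p => ?_
    have h1 : infConv b c u.1 u.2 ≤ b p.1 p.2 + c * dist u p :=
      ciInf_le (infConv_bddBelow hM hc u) p
    have h2 : dist u p ≤ dist u v + dist v p := dist_triangle u v p
    have h3 : c * dist u p ≤ c * (dist u v + dist v p) := mul_le_mul_of_nonneg_left h2 hc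
    have : infConv b c u.1 u.2 ≤ b p.1 p.2 + c * dist v p + c * dist u v := by
      rw [mul_add] at h3; linarith
    linarith
  have h1 := key q q'
  have h2 := key q' q
  rw [dist_comm q' q] at h2
  rw [abs_sub_le_iff]
  constructor <;> linarith

include hM hc in
lemma infConv_continuous : Continuous (fun q : ℝ × ℝ => infConv b c q.1 q.2) := by
  have : LipschitzWith c.toNNReal (fun q : ℝ × ℝ => infConv b c q.1 q.2) := by
    refine LipschitzWith.of_dist_le_mul fun q q' => ?_
    rw [Real.dist_eq, Real.coe_toNNReal c hc]
    exact infConv_lip hM hc q q'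
  exact this.continuous

include hM hc in
lemma infConv_lipschitz_x (t : ℝ) :
    LipschitzWith c.toNNReal (fun x => infConv b c x t) := by
  refine LipschitzWith.of_dist_le_mul fun x y => ?_
  rw [Real.dist_eq, Real.coe_toNNReal c hc]
  have := infConv_lip hM hc (x, t) (y, t)
  simpa [Prod.dist_eq, Real.dist_eq] using this

include hM in
lemma infConv_approx (hbcont : Continuous fun p : ℝ × ℝ => b p.1 p.2)
    (K : Set (ℝ × ℝ)) (hK : IsCompact K) {δ : ℝ} (hδ : 0 < δ) :
    ∃ N : ℝ, 0 ≤ N ∧ ∀ c ≥ N, ∀ q ∈ K, b q.1 q.2 - δ ≤ infConv b c q.1 q.2 := by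
  have hM0 : 0 ≤ M := le_trans (abs_nonneg _) (hM 0 0)
  have hK' : IsCompact (Metric.cthickening 1 K) := hK.cthickening
  have hunif : UniformContinuousOn (fun p : ℝ × ℝ => b p.1 p.2) (Metric.cthickening 1 K) :=
    hK'.uniformContinuousOn_of_continuous hbcont.continuousOn
  rw [Metric.uniformContinuousOn_iff] at hunif
  obtain ⟨η, hη, hη'⟩ := hunif δ hδ
  have hη0 : 0 < min η 1 := lt_min hη zero_lt_one
  refine ⟨(2*M + 1)/(min η 1/2), div_nonneg (by linarith) (by linarith), fun c hc q hq => ?_⟩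
  have hc0 : 0 ≤ c := le_trans (div_nonneg (by linarith) (by linarith)) hc
  refine le_ciInf fun p => ?_
  rcases le_or_gt (dist q p) (min η 1/2) with hd | hd
  · -- p is close to q : use uniform continuity
    have hpK : p ∈ Metric.cthickening 1 K := by
      apply Metric.mem_cthickening_of_dist_le p q 1 K hq
      calc dist p q = dist q p := dist_comm p q
        _ ≤ min η 1/2 := hd
        _ ≤ 1 := by have := min_le_right η (1:ℝ); linarith
    have hqK : q ∈ Metric.cthickening 1 K := Metric.self_subset_cthickening K hq
    have hdist : dist q p < η := by
      have := min_le_left η (1:ℝ); linarith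
    have := hη' q hqK p hpK hdist
    rw [Real.dist_eq, abs_sub_lt_iff] at this
    have h2 : 0 ≤ c * dist q p := mul_nonneg hc0 dist_nonneg
    have : b q.1 q.2 - b p.1 p.2 < δ := this.1
    linarith
  · -- p is far from q : use boundedness
    have h1 : (2*M + 1) ≤ c * (min η 1/2) := (div_le_iff₀ (by linarith)).1 hc
    have h2 : c * (min η 1/2) ≤ c * dist q p := mul_le_mul_of_nonneg_left hd.le hc0
    have h3 := (abs_le.1 (hM p.1 p.2)).1
    have h4 := (abs_le.1 (hM q.1 q.2)).2
    linarith

end infConv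


lemma exists_sol_of_lipschitz {v : ℝ → ℝ → ℝ} {L : ℝ≥0}
    (hlip : ∀ t, LipschitzWith L (fun x => v x t))
    (hcont : Continuous fun p : ℝ × ℝ => v p.1 p.2)
    {M : ℝ} (hM : ∀ x t, |v x t| ≤ M)
    {s T : ℝ} (hsT : s ≤ T) (x₀ : ℝ) :
    ∃ α : ℝ → ℝ, α s = x₀ ∧
      ∀ t ∈ Set.Icc s T, HasDerivWithinAt α (v (α t) t) (Set.Icc s T) t := by
  have hM0 : 0 ≤ M := le_trans (abs_nonneg _) (hM 0 0)
  have hpl : IsPicardLindelof (fun t x => v x t) (tmin := s) (tmax := T) ⟨s, le_rfl, hsT⟩ x₀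
      (M*(T-s)+1).toNNReal 0 M.toNNReal L :=
    { lipschitzOnWith := fun t _ => (hlip t).lipschitzOnWith
      continuousOn := fun x _ =>
        (hcont.comp (Continuous.prodMk continuous_const continuous_id)).continuousOn
      norm_le := fun t _ x _ => by rw [Real.norm_eq_abs, Real.coe_toNNReal M hM0]; exact hM x t
      mul_max_le := by
        have : max (T - s) (s - s) = T - s := by
          rw [max_eq_left]; linarith
        simp only [this, Real.coe_toNNReal M hM0, NNReal.coe_zero, sub_zero]
        rw [Real.coe_toNNReal _ (by nlinarith)]; nlinarith }
  obtain ⟨f, hf0, hf⟩ := hpl.exists_eq_forall_mem_Icc_hasDerivWithinAt₀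
  exact ⟨f, hf0, fun t ht => hf t ht⟩

lemma sol_integral_form {s T : ℝ} {α h : ℝ → ℝ}
    (hd : ∀ t ∈ Set.Icc s T, HasDerivWithinAt α (h t) (Set.Icc s T) t)
    (hcont : ContinuousOn h (Set.Icc s T)) :
    ∀ t ∈ Set.Icc s T, α t = α s + ∫ τ in s..t, h τ := by
  intro t ht
  have hst : s ≤ t := ht.1
  have hIcc : Set.Icc s t ⊆ Set.Icc s T := Set.Icc_subset_Icc le_rfl ht.2
  have hαT : ContinuousOn α (Set.Icc s T) := fun τ hτ => (hd τ hτ).continuousWithinAt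
  have key : (∫ τ in s..t, h τ) = α t - α s := by
    apply intervalIntegral.integral_eq_sub_of_hasDeriv_right_of_le hst
    · exact hαT.mono hIcc
    · intro τ hτ
      have hτ' : τ ∈ Set.Ioo s T := ⟨hτ.1, lt_of_lt_of_le hτ.2 ht.2⟩
      have : HasDerivAt α (h τ) τ :=
        (hd τ (Set.Ioo_subset_Icc_self hτ')).hasDerivAt (Icc_mem_nhds hτ'.1 hτ'.2)
      exact this.hasDerivWithinAt
    · exact (hcont.mono hIcc).intervalIntegrable_of_Icc hst
  linarith [key]

set_option maxHeartbeats 1600000 in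
/-- **Forward flow for one-sided Lipschitz velocity fields.** If
`b : ℝ × [0,T] → ℝ` is bounded, continuous and one-sided Lipschitz in space with a uniform
constant, then it generates a unique forward flow `X`: (i) for each `(x, s)` the map
`t ↦ X_t(x,s)` is the unique C¹ solution of `ẋ = b(x,t)` on `[s,T]` with `X_s(x,s) = x`;
(ii) `(x,s,t) ↦ X_t(x,s)` is Lipschitz on `{0 ≤ s ≤ t ≤ T}`; (iii) the semigroup property
`X_t(X_r(x,s), r) = X_t(x,s)` holds for `0 ≤ s ≤ r ≤ t ≤ T`. -/
theorem forward_flow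
    (T : ℝ) (hT : 0 < T) (b : ℝ → ℝ → ℝ)
    (hbbdd : ∃ M, ∀ z t, |b z t| ≤ M)
    (hbcont : Continuous fun p : ℝ × ℝ => b p.1 p.2)
    (C : ℝ) (hC : 0 ≤ C)
    (hosl : ∀ t ∈ Set.Icc (0:ℝ) T, ∀ p q : ℝ,
      (b p t - b q t) * (p - q) ≤ C * (p - q) ^ 2) :
    ∃ X : ℝ → ℝ → ℝ → ℝ,  -- `X x s t` is the flow `X_t(x, s)`
      -- (i) existence and uniqueness of the C¹ solution through `(x, s)`
      (∀ x s, s ∈ Set.Icc (0:ℝ) T →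
        X x s s = x ∧
        (∀ t ∈ Set.Icc s T, HasDerivWithinAt (X x s) (b (X x s t) t) (Set.Icc s T) t) ∧
        (∀ g : ℝ → ℝ, ContinuousOn g (Set.Icc s T) → g s = x →
          (∀ t ∈ Set.Ioo s T, HasDerivAt g (b (g t) t) t) →
          ∀ t ∈ Set.Icc s T, g t = X x s t)) ∧
      -- (ii) joint Lipschitz continuity on `{0 ≤ s ≤ t ≤ T}`
      (∃ K : ℝ≥0, LipschitzOnWith K (fun p : ℝ × ℝ × ℝ => X p.1 p.2.1 p.2.2)
        {p : ℝ × ℝ × ℝ | 0 ≤ p.2.1 ∧ p.2.1 ≤ p.2.2 ∧ p.2.2 ≤ T}) ∧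
      -- (iii) semigroup property
      (∀ x s r t, 0 ≤ s → s ≤ r → r ≤ t → t ≤ T →
        X (X x s r) r t = X x s t) := by
  obtain ⟨M, hM⟩ := hbbdd
  have hM0 : 0 ≤ M := le_trans (abs_nonneg _) (hM 0 0)
  -- approximating Lipschitz fields
  set bn : ℕ → ℝ → ℝ → ℝ := fun n x t => infConv b ((n:ℝ)+1) x t with hbndef
  have hcn : ∀ n : ℕ, (0:ℝ) ≤ (n:ℝ)+1 := fun n => by positivity
  have hbn_le : ∀ n x t, bn n x t ≤ b x t := fun n x t => infConv_le hM (hcn n) x t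
  have hbn_lb : ∀ n x t, -M ≤ bn n x t := fun n x t => neg_le_infConv hM (hcn n) x t
  have hbn_abs : ∀ (n : ℕ) (x t : ℝ), |bn n x t| ≤ M := fun n x t =>
    abs_le.2 ⟨hbn_lb n x t, le_trans (hbn_le n x t) (abs_le.1 (hM x t)).2⟩
  have hbn_cont : ∀ n : ℕ, Continuous (fun p : ℝ × ℝ => bn n p.1 p.2) :=
    fun n => infConv_continuous hM (hcn n)
  have hbn_lip : ∀ (n : ℕ) (t : ℝ), LipschitzWith ((n:ℝ)+1).toNNReal (fun x => bn n x t) :=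
    fun n t => infConv_lipschitz_x hM (hcn n) t
  clear_value bn
  -- choose solutions of the approximating ODEs
  have hsolex : ∀ (n : ℕ) (x s : ℝ), ∃ α : ℝ → ℝ, s ≤ T →
      (α s = x ∧ ∀ t ∈ Set.Icc s T, HasDerivWithinAt α (bn n (α t) t) (Set.Icc s T) t) := by
    intro n x s
    rcases le_or_gt s T with h | h
    · obtain ⟨α, h1, h2⟩ := exists_sol_of_lipschitz (hbn_lip n) (hbn_cont n) (hbn_abs n) h x
      exact ⟨α, fun _ => ⟨h1, h2⟩⟩
    · exact ⟨fun _ => x, fun h' => absurd h' h.not_ge⟩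
  choose sol hsol using hsolex
  -- the flow, defined as limit of the approximating solutions (with clamped time)
  set X : ℝ → ℝ → ℝ → ℝ :=
    fun x s t => limUnder atTop (fun n => sol n x s (max s (min t T))) with hXdef
  -- upgrade derivatives within `Icc s T` to within `Ici t`
  have hupg : ∀ {s t : ℝ} {α : ℝ → ℝ} {d : ℝ}, t ∈ Set.Ico s T →
      HasDerivWithinAt α d (Set.Icc s T) t → HasDerivWithinAt α d (Set.Ici t) t := by
    intro s t α d ht h
    exact h.mono_of_mem_nhdsWithin (Icc_mem_nhdsGE_of_mem ht)
  -- core facts about the limit flow, for each starting point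
  have main : ∀ (x s : ℝ), s ∈ Set.Icc (0:ℝ) T →
      (X x s s = x) ∧ Continuous (X x s) ∧
      (∀ t ∈ Set.Icc s T, HasDerivWithinAt (X x s) (b (X x s t) t) (Set.Icc s T) t) ∧
      (∀ t ∈ Set.Icc s T, |X x s t - x| ≤ M * (t - s)) := by
    intro x s hs
    have hsT : s ≤ T := hs.2
    set G : ℕ → ℝ → ℝ := fun n => sol n x s with hGdef
    have hG0 : ∀ n, G n s = x := fun n => (hsol n x s hsT).1
    have hGd : ∀ n, ∀ t ∈ Set.Icc s T,
        HasDerivWithinAt (G n) (bn n (G n t) t) (Set.Icc s T) t :=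
      fun n => (hsol n x s hsT).2
    have hGc : ∀ n, ContinuousOn (G n) (Set.Icc s T) :=
      fun n t ht => (hGd n t ht).continuousWithinAt
    have hGb : ∀ n, ∀ t ∈ Set.Icc s T, |G n t - x| ≤ M * (t - s) := by
      intro n t ht
      have := Convex.norm_image_sub_le_of_norm_hasDerivWithin_le
        (f := G n) (f' := fun t => bn n (G n t) t) (s := Set.Icc s T) (C := M)
        (fun τ hτ => hGd n τ hτ) (fun τ _ => by rw [Real.norm_eq_abs]; exact hbn_abs n _ _)
        (convex_Icc s T) (Set.left_mem_Icc.2 hsT) ht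
      rw [hG0 n] at this
      rw [Real.norm_eq_abs, Real.norm_eq_abs, abs_of_nonneg (by linarith [ht.1] : (0:ℝ) ≤ t - s)]
        at this
      exact this
    -- all solutions stay in a fixed compact set
    set K : Set (ℝ × ℝ) := Set.Icc (x - M*T) (x + M*T) ×ˢ Set.Icc 0 T with hKdef
    have hKc : IsCompact K := (isCompact_Icc).prod isCompact_Icc
    have hGK : ∀ n, ∀ t ∈ Set.Icc s T, (G n t, t) ∈ K := by
      intro n t ht
      have h1 := hGb n t ht
      have h2 : M * (t - s) ≤ M * T := by nlinarith [ht.1, ht.2, hs.1]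
      rw [abs_le] at h1
      exact ⟨⟨by linarith [h1.1], by linarith [h1.2]⟩, ⟨le_trans hs.1 ht.1, ht.2⟩⟩
    -- uniform Cauchy property via the one-sided Grönwall estimate
    have hUC : UniformCauchySeqOn G atTop (Set.Icc s T) := by
      rw [Metric.uniformCauchySeqOn_iff]
      intro ε hε
      set δ : ℝ := ε/2 * Real.exp (-((C+1)*T)) with hδdef
      have hδ : 0 < δ := by positivity
      obtain ⟨N₀, hN₀0, hN₀⟩ := infConv_approx hM hbcont K hKc hδ
      refine ⟨⌈N₀⌉₊, fun m hm n hn t ht => ?_⟩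
      have hNle : ∀ k : ℕ, ⌈N₀⌉₊ ≤ k → N₀ ≤ (k:ℝ)+1 := by
        intro k hk
        have := Nat.le_ceil N₀
        have h2 : (⌈N₀⌉₊ : ℝ) ≤ (k : ℝ) := Nat.cast_le.2 hk
        linarith
      have hclose : ∀ (k : ℕ), ⌈N₀⌉₊ ≤ k → ∀ τ ∈ Set.Icc s T, |bn k (G k τ) τ - b (G k τ) τ| ≤ δ := by
        intro k hk τ hτ
        have h1 : b (G k τ) τ - δ ≤ bn k (G k τ) τ := by
          rw [hbndef]; exact hN₀ ((k:ℝ)+1) (hNle k hk) (G k τ, τ) (hGK k τ hτ)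
        have h2 := hbn_le k (G k τ) τ
        rw [abs_le]
        exact ⟨by linarith, by linarith⟩
      -- Grönwall for the squared difference
      have key := sq_gronwall (C := C+1) (E := δ^2)
        (hGc m) (hGc n)
        (fun τ hτ => hupg hτ (hGd m τ (Set.Ico_subset_Icc_self hτ)))
        (fun τ hτ => hupg hτ (hGd n τ (Set.Ico_subset_Icc_self hτ)))
        (fun τ hτ => by
          have hτ' : τ ∈ Set.Icc s T := Set.Ico_subset_Icc_self hτ
          set p := G m τ
          set q := G n τ
          have hosl' : (b p τ - b q τ) * (p - q) ≤ C * (p - q)^2 :=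
            hosl τ ⟨le_trans hs.1 hτ'.1, hτ'.2⟩ p q
          have he1 : |bn m p τ - b p τ| ≤ δ := hclose m hm τ hτ'
          have he2 : |bn n q τ - b q τ| ≤ δ := hclose n hn τ hτ'
          have habs1 : (p - q) * (bn m p τ - b p τ) ≤ |p - q| * δ := by
            calc (p - q) * (bn m p τ - b p τ) ≤ |(p - q) * (bn m p τ - b p τ)| := le_abs_self _
              _ = |p - q| * |bn m p τ - b p τ| := abs_mul _ _
              _ ≤ |p - q| * δ := mul_le_mul_of_nonneg_left he1 (abs_nonneg _)
          have habs2 : (p - q) * (b q τ - bn n q τ) ≤ |p - q| * δ := by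
            calc (p - q) * (b q τ - bn n q τ) ≤ |(p - q) * (b q τ - bn n q τ)| := le_abs_self _
              _ = |p - q| * |b q τ - bn n q τ| := abs_mul _ _
              _ ≤ |p - q| * δ := by
                  rw [abs_sub_comm]
                  exact mul_le_mul_of_nonneg_left (abs_sub_comm (bn n q τ) (b q τ) ▸ he2) (abs_nonneg _)
          have hAM : 2 * (|p - q| * δ) ≤ (p - q)^2 + δ^2 := by
            nlinarith [sq_nonneg (|p - q| - δ), sq_abs (p - q)]
          have hexpand : (p - q) * (bn m p τ - bn n q τ)
              = (b p τ - b q τ) * (p - q) + (p - q) * (bn m p τ - b p τ)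
                + (p - q) * (b q τ - bn n q τ) := by ring
          rw [hexpand]
          nlinarith [hosl', habs1, habs2, hAM])
      have hkey := key t ht
      rw [hG0 m, hG0 n, sub_self] at hkey
      -- numerical estimate of the Grönwall bound
      have h2C : (2*(C+1)) ≠ 0 := by positivity
      rw [gronwallBound_of_K_ne_0 h2C] at hkey
      simp only [show ((0:ℝ))^2 = 0 from by norm_num, zero_mul, zero_add] at hkey
      have hts : 0 ≤ t - s := by linarith [ht.1]
      have htsT : t - s ≤ T := by nlinarith [ht.2, hs.1]
      have hexp1 : Real.exp (2*(C+1)*(t-s)) - 1 ≤ Real.exp (2*(C+1)*T) := by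
        have h1 : 2*(C+1)*(t-s) ≤ 2*(C+1)*T := by nlinarith
        linarith [Real.exp_le_exp.2 h1]
      have hfrac : 2*δ^2 / (2*(C+1)) ≤ δ^2 := by
        rw [div_le_iff₀ (by positivity)]
        nlinarith [sq_nonneg δ]
      have hδ2 : δ^2 * Real.exp (2*(C+1)*T) = (ε/2)^2 := by
        have hsq2 : Real.exp (-((C+1)*T)) ^ 2 = Real.exp ((-((C+1)*T)) + (-((C+1)*T))) := by
          rw [Real.exp_add]; ring
        rw [hδdef, mul_pow, hsq2, mul_assoc, ← Real.exp_add]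
        have : -((C+1)*T) + -((C+1)*T) + 2*(C+1)*T = 0 := by ring
        rw [this, Real.exp_zero, mul_one]
      have hsq : (G m t - G n t)^2 ≤ (ε/2)^2 := by
        have hstep : 2*δ^2 / (2*(C+1)) * (Real.exp (2*(C+1)*(t-s)) - 1)
            ≤ δ^2 * Real.exp (2*(C+1)*T) := by
          have hb1 : (0:ℝ) ≤ Real.exp (2*(C+1)*(t-s)) - 1 := by
            have : (0:ℝ) ≤ 2*(C+1)*(t-s) := by positivity
            linarith [Real.one_le_exp this]
          calc 2*δ^2 / (2*(C+1)) * (Real.exp (2*(C+1)*(t-s)) - 1)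
              ≤ δ^2 * (Real.exp (2*(C+1)*(t-s)) - 1) :=
                mul_le_mul_of_nonneg_right hfrac hb1
            _ ≤ δ^2 * Real.exp (2*(C+1)*T) :=
                mul_le_mul_of_nonneg_left hexp1 (sq_nonneg δ)
        exact le_trans (le_trans hkey hstep) (le_of_eq hδ2)
      rw [Real.dist_eq]
      have h1 : |G m t - G n t| ≤ ε/2 :=
        abs_le.2 (abs_le_of_sq_le_sq' hsq (by positivity))
      linarith
    -- pointwise limits
    set R : ℝ → ℝ := fun u => limUnder atTop (fun n => G n u) with hRdef
    have htendsto : ∀ t ∈ Set.Icc s T, Filter.Tendsto (fun n => G n t) atTop (𝓝 (R t)) := by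
      intro t ht
      have hcs : CauchySeq fun n => G n t := by
        rw [Metric.cauchySeq_iff]
        intro ε hε
        obtain ⟨N, hN⟩ := Metric.uniformCauchySeqOn_iff.1 hUC ε hε
        exact ⟨N, fun m hm n hn => hN m hm n hn t ht⟩
      exact hcs.tendsto_limUnder
    have hTU : TendstoUniformlyOn G R atTop (Set.Icc s T) :=
      hUC.tendstoUniformlyOn_of_tendsto htendsto
    have hRc : ContinuousOn R (Set.Icc s T) :=
      hTU.continuousOn (Filter.Eventually.of_forall fun n => hGc n).frequently
    -- identification of X with R after clamping
    have hclamp : ∀ t : ℝ, max s (min t T) ∈ Set.Icc s T :=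
      fun t => ⟨le_max_left _ _, max_le hsT (min_le_right _ _)⟩
    have hXR : ∀ t : ℝ, X x s t = R (max s (min t T)) := fun t => rfl
    have hXeq : ∀ t ∈ Set.Icc s T, X x s t = R t := by
      intro t ht
      rw [hXR t, max_eq_right (by rw [min_eq_left ht.2]; exact ht.1), min_eq_left ht.2]
    have hXcont : Continuous (X x s) := by
      have hclampc : Continuous fun t : ℝ => max s (min t T) :=
        continuous_const.max (continuous_id.min continuous_const)
      exact hRc.comp_continuous hclampc hclamp
    have htendX : ∀ t ∈ Set.Icc s T, Filter.Tendsto (fun n => G n t) atTop (𝓝 (X x s t)) := by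
      intro t ht
      rw [hXeq t ht]
      exact htendsto t ht
    have hX0 : X x s s = x := by
      have h1 := htendX s (Set.left_mem_Icc.2 hsT)
      have h2 : Filter.Tendsto (fun n => G n s) atTop (𝓝 x) := by
        have : (fun n => G n s) = fun _ => x := funext fun n => hG0 n
        rw [this]; exact tendsto_const_nhds
      exact tendsto_nhds_unique h1 h2
    have hXb : ∀ t ∈ Set.Icc s T, |X x s t - x| ≤ M * (t - s) := by
      intro t ht
      have h1 : Filter.Tendsto (fun n => |G n t - x|) atTop (𝓝 |X x s t - x|) :=
        ((htendX t ht).sub tendsto_const_nhds).abs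
      exact le_of_tendsto h1 (Filter.Eventually.of_forall fun n => hGb n t ht)
    have hXK : ∀ t ∈ Set.Icc s T, (X x s t, t) ∈ K := by
      intro t ht
      have h1 := hXb t ht
      have h2 : M * (t - s) ≤ M * T := by nlinarith [ht.1, ht.2, hs.1]
      rw [abs_le] at h1
      exact ⟨⟨by linarith [h1.1], by linarith [h1.2]⟩, ⟨le_trans hs.1 ht.1, ht.2⟩⟩
    -- the integral equation for the limit
    set h : ℝ → ℝ := fun τ => b (X x s τ) τ with hhdef
    have hhc : Continuous h := hbcont.comp (hXcont.prodMk continuous_id)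
    have hint : ∀ t ∈ Set.Icc s T, X x s t = x + ∫ τ in s..t, h τ := by
      intro t ht
      have hIsub : Set.uIoc s t ⊆ Set.Icc s T := by
        rw [Set.uIoc_of_le ht.1]
        exact fun τ hτ => ⟨le_of_lt hτ.1, le_trans hτ.2 ht.2⟩
      have hGint : ∀ n, G n t = x + ∫ τ in s..t, bn n (G n τ) τ := by
        intro n
        have hcint : ContinuousOn (fun τ => bn n (G n τ) τ) (Set.Icc s T) :=
          (hbn_cont n).comp_continuousOn ((hGc n).prodMk continuousOn_id)
        have := sol_integral_form (hGd n) hcint t ht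
        rwa [hG0 n] at this
      have hlim' : Filter.Tendsto (fun n => ∫ τ in s..t, bn n (G n τ) τ) atTop
          (𝓝 (∫ τ in s..t, h τ)) := by
        apply intervalIntegral.tendsto_integral_filter_of_dominated_convergence
          (bound := fun _ => M)
        · refine Filter.Eventually.of_forall fun n => ?_
          have hcint : ContinuousOn (fun τ => bn n (G n τ) τ) (Set.uIoc s t) :=
            ((hbn_cont n).comp_continuousOn ((hGc n).prodMk continuousOn_id)).mono hIsub
          exact hcint.aestronglyMeasurable measurableSet_uIoc
        · refine Filter.Eventually.of_forall fun n => ae_of_all _ fun τ hτ => ?_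
          rw [Real.norm_eq_abs]
          exact hbn_abs n _ _
        · exact intervalIntegrable_const
        · refine ae_of_all _ fun τ hτ => ?_
          have hτ' : τ ∈ Set.Icc s T := hIsub hτ
          rw [Metric.tendsto_atTop]
          intro ε hε
          obtain ⟨N₀, hN₀0, hN₀⟩ := infConv_approx hM hbcont K hKc (half_pos hε)
          have hbG : Filter.Tendsto (fun n => b (G n τ) τ) atTop (𝓝 (b (X x s τ) τ)) := by
            have h1 : Filter.Tendsto (fun n => (G n τ, τ)) atTop (𝓝 (X x s τ, τ)) :=
              (htendX τ hτ').prodMk_nhds tendsto_const_nhds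
            exact (hbcont.tendsto _).comp h1
          obtain ⟨N₁, hN₁⟩ := Metric.tendsto_atTop.1 hbG (ε/2) (half_pos hε)
          refine ⟨max N₁ ⌈N₀⌉₊, fun n hn => ?_⟩
          have hn₁ : N₁ ≤ n := le_trans (le_max_left _ _) hn
          have hn₀ : N₀ ≤ (n:ℝ)+1 := by
            have h2 := Nat.le_ceil N₀
            have h3 : (⌈N₀⌉₊ : ℝ) ≤ (n : ℝ) := Nat.cast_le.2 (le_trans (le_max_right _ _) hn)
            linarith
          have hKmem : (G n τ, τ) ∈ K := hGK n τ hτ'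
          have h1 : b (G n τ) τ - ε/2 ≤ bn n (G n τ) τ := by
            rw [hbndef]; exact hN₀ ((n:ℝ)+1) hn₀ (G n τ, τ) hKmem
          have h2 : bn n (G n τ) τ ≤ b (G n τ) τ := hbn_le n _ _
          have h3 := hN₁ n hn₁
          rw [Real.dist_eq, abs_sub_lt_iff] at h3 ⊢
          constructor <;> [skip; skip] <;> cases h3 with
          | intro h3a h3b => first
            | (linarith)
            | (linarith)
      have hGlim := htendX t ht
      have hlim2 : Filter.Tendsto (fun n => x + ∫ τ in s..t, bn n (G n τ) τ) atTop
          (𝓝 (x + ∫ τ in s..t, h τ)) := hlim'.const_add x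
      have : (fun n => G n t) = fun n => x + ∫ τ in s..t, bn n (G n τ) τ :=
        funext hGint
      rw [this] at hGlim
      exact tendsto_nhds_unique hGlim hlim2
    -- differentiability
    have hXd : ∀ t ∈ Set.Icc s T, HasDerivWithinAt (X x s) (b (X x s t) t) (Set.Icc s T) t := by
      intro t ht
      have hmeas : StronglyMeasurableAtFilter h (𝓝 t) :=
        ⟨Set.univ, Filter.univ_mem, hhc.aestronglyMeasurable.restrict⟩
      have hF : HasDerivAt (fun u => x + ∫ τ in s..u, h τ) (h t) t :=
        (intervalIntegral.integral_hasDerivAt_right (hhc.intervalIntegrable s t)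
          hmeas hhc.continuousAt).const_add x
      exact (hF.hasDerivWithinAt).congr (fun u hu => hint u hu) (hint t ht)
    exact ⟨hX0, hXcont, hXd, hXb⟩
  -- uniqueness of solutions
  have huniq : ∀ (x s : ℝ), s ∈ Set.Icc (0:ℝ) T → ∀ g : ℝ → ℝ,
      ContinuousOn g (Set.Icc s T) → g s = x →
      (∀ t ∈ Set.Ioo s T, HasDerivAt g (b (g t) t) t) →
      ∀ t ∈ Set.Icc s T, g t = X x s t := by
    intro x s hs g hgc hgs hgd t₀ ht₀
    obtain ⟨hX0, hXcont, hXd, hXb⟩ := main x s hs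
    rcases eq_or_lt_of_le ht₀.1 with heq | hlt
    · rw [← heq, hgs, hX0]
    have key : ∀ s' ∈ Set.Ioc s t₀, (g t₀ - X x s t₀)^2
        ≤ (g s' - X x s s')^2 * Real.exp (2*C*T) := by
      intro s' hs'
      have hs's : s ≤ s' := hs'.1.le
      have hsub : Set.Icc s' t₀ ⊆ Set.Icc s T := Set.Icc_subset_Icc hs's ht₀.2
      have hgron := sq_gronwall (s := s') (T := t₀) (C := C) (E := 0)
        (g1 := g) (g2 := X x s)
        (d1 := fun τ => b (g τ) τ) (d2 := fun τ => b (X x s τ) τ)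
        (hgc.mono hsub) (hXcont.continuousOn)
        (fun τ hτ => (hgd τ ⟨lt_of_lt_of_le hs'.1 hτ.1, lt_of_lt_of_le hτ.2 ht₀.2⟩).hasDerivWithinAt)
        (fun τ hτ => hupg ⟨le_trans hs's hτ.1, lt_of_lt_of_le hτ.2 ht₀.2⟩
          (hXd τ ⟨le_trans hs's hτ.1, le_of_lt (lt_of_lt_of_le hτ.2 ht₀.2)⟩))
        (fun τ hτ => by
          have hτIcc : τ ∈ Set.Icc (0:ℝ) T :=
            ⟨le_trans hs.1 (le_trans hs's hτ.1), le_of_lt (lt_of_lt_of_le hτ.2 ht₀.2)⟩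
          have := hosl τ hτIcc (g τ) (X x s τ)
          calc (g τ - X x s τ) * (b (g τ) τ - b (X x s τ) τ)
              = (b (g τ) τ - b (X x s τ) τ) * (g τ - X x s τ) := by ring
            _ ≤ C * (g τ - X x s τ)^2 := this
            _ ≤ C * (g τ - X x s τ)^2 + 0 := by linarith)
      have h1 := hgron t₀ ⟨hs'.2, le_rfl⟩
      rw [mul_zero, gronwallBound_ε0] at h1
      refine le_trans h1 ?_
      apply mul_le_mul_of_nonneg_left _ (sq_nonneg _)
      apply Real.exp_le_exp.2
      have h2 : t₀ - s' ≤ T := by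
        have := hs'.1
        have := ht₀.2
        have := hs.1
        linarith
      nlinarith
    -- let s' → s⁺
    have hne : (𝓝[Set.Ioc s t₀] s).NeBot := by
      rw [← mem_closure_iff_nhdsWithin_neBot, closure_Ioc (ne_of_lt hlt)]
      exact ⟨le_rfl, hlt.le⟩
    have htends : Filter.Tendsto (fun s' => (g s' - X x s s')^2 * Real.exp (2*C*T))
        (𝓝[Set.Ioc s t₀] s) (𝓝 ((g s - X x s s)^2 * Real.exp (2*C*T))) := by
      have hsub : Set.Ioc s t₀ ⊆ Set.Icc s T := fun τ hτ => ⟨hτ.1.le, le_trans hτ.2 ht₀.2⟩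
      have hg' : Filter.Tendsto g (𝓝[Set.Ioc s t₀] s) (𝓝 (g s)) :=
        (hgc s (Set.left_mem_Icc.2 hs.2)).mono_left (nhdsWithin_mono s hsub)
      have hX' : Filter.Tendsto (X x s) (𝓝[Set.Ioc s t₀] s) (𝓝 (X x s s)) :=
        (hXcont.continuousAt.continuousWithinAt).tendsto
      exact (((hg'.sub hX').pow 2).mul_const _)
    rw [hgs, hX0, sub_self] at htends
    simp only [show ((0:ℝ))^2 = 0 from by norm_num, zero_mul] at htends
    have hle : (g t₀ - X x s t₀)^2 ≤ 0 := by
      refine ge_of_tendsto htends ?_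
      filter_upwards [self_mem_nhdsWithin] with s' hs'
      exact key s' hs'
    have h0 : (g t₀ - X x s t₀)^2 = 0 := le_antisymm hle (sq_nonneg _)
    have h1 : g t₀ - X x s t₀ = 0 := by
      have := sq_eq_zero_iff.1 h0
      exact this
    linarith
  -- Lipschitz dependence on the initial position
  have hlipx : ∀ (x y s : ℝ), s ∈ Set.Icc (0:ℝ) T → ∀ t ∈ Set.Icc s T,
      |X x s t - X y s t| ≤ Real.exp (C*T) * |x - y| := by
    intro x y s hs t ht
    obtain ⟨hX0x, hXcx, hXdx, _⟩ := main x s hs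
    obtain ⟨hX0y, hXcy, hXdy, _⟩ := main y s hs
    have hgron := sq_gronwall (s := s) (T := T) (C := C) (E := 0)
      (g1 := X x s) (g2 := X y s)
      (d1 := fun τ => b (X x s τ) τ) (d2 := fun τ => b (X y s τ) τ)
      hXcx.continuousOn hXcy.continuousOn
      (fun τ hτ => hupg hτ (hXdx τ (Set.Ico_subset_Icc_self hτ)))
      (fun τ hτ => hupg hτ (hXdy τ (Set.Ico_subset_Icc_self hτ)))
      (fun τ hτ => by
        have hτIcc : τ ∈ Set.Icc (0:ℝ) T := ⟨le_trans hs.1 hτ.1, hτ.2.le⟩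
        have := hosl τ hτIcc (X x s τ) (X y s τ)
        calc (X x s τ - X y s τ) * (b (X x s τ) τ - b (X y s τ) τ)
            = (b (X x s τ) τ - b (X y s τ) τ) * (X x s τ - X y s τ) := by ring
          _ ≤ C * (X x s τ - X y s τ)^2 := this
          _ ≤ C * (X x s τ - X y s τ)^2 + 0 := by linarith)
    have h1 := hgron t ht
    rw [mul_zero, gronwallBound_ε0, hX0x, hX0y] at h1
    have h2 : Real.exp (2*C*(t-s)) ≤ Real.exp (2*C*T) := by
      apply Real.exp_le_exp.2
      have h3 : t - s ≤ T := by
        have := ht.2; have := hs.1; linarith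
      nlinarith
    have h4 : (X x s t - X y s t)^2 ≤ (x-y)^2 * Real.exp (2*C*T) :=
      le_trans h1 (mul_le_mul_of_nonneg_left h2 (sq_nonneg _))
    have h5 : (x-y)^2 * Real.exp (2*C*T) = (Real.exp (C*T) * |x - y|)^2 := by
      have he : Real.exp (C*T) ^ 2 = Real.exp (2*C*T) := by
        rw [sq, ← Real.exp_add, show C*T + C*T = 2*C*T from by ring]
      rw [mul_pow, sq_abs, he]
      ring
    rw [h5] at h4
    have h6 : (0:ℝ) ≤ Real.exp (C*T) * |x - y| := by positivity
    exact abs_le.2 (abs_le_of_sq_le_sq' h4 h6) |>.trans_eq rfl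
  -- Lipschitz dependence on time
  have hlipt : ∀ (x s : ℝ), s ∈ Set.Icc (0:ℝ) T → ∀ t ∈ Set.Icc s T, ∀ t' ∈ Set.Icc s T,
      |X x s t - X x s t'| ≤ M * |t - t'| := by
    intro x s hs t ht t' ht'
    obtain ⟨_, _, hXd, _⟩ := main x s hs
    have := Convex.norm_image_sub_le_of_norm_hasDerivWithin_le
      (f := X x s) (f' := fun τ => b (X x s τ) τ) (s := Set.Icc s T) (C := M)
      (fun τ hτ => hXd τ hτ) (fun τ _ => by rw [Real.norm_eq_abs]; exact hM _ _)
      (convex_Icc s T) ht' ht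
    rw [Real.norm_eq_abs, Real.norm_eq_abs] at this
    exact this
  -- semigroup property
  have hsg : ∀ x s r t, 0 ≤ s → s ≤ r → r ≤ t → t ≤ T → X (X x s r) r t = X x s t := by
    intro x s r t h0s hsr hrt htT
    have hsI : s ∈ Set.Icc (0:ℝ) T := ⟨h0s, le_trans hsr (le_trans hrt htT)⟩
    have hrI : r ∈ Set.Icc (0:ℝ) T := ⟨le_trans h0s hsr, le_trans hrt htT⟩
    obtain ⟨_, hXc, hXd, _⟩ := main x s hsI
    have := huniq (X x s r) r hrI (X x s) (hXc.continuousOn) rfl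
      (fun τ hτ => (hXd τ ⟨le_trans hsr hτ.1.le, hτ.2.le⟩).hasDerivAt
        (Icc_mem_nhds (lt_of_le_of_lt hsr hτ.1) hτ.2))
      t ⟨hrt, htT⟩
    exact this.symm
  -- assemble the three parts
  have hexp1 : (1:ℝ) ≤ Real.exp (C*T) := Real.one_le_exp (by positivity)
  set K₀ : ℝ := Real.exp (C*T) * (M+1) + 2*M + Real.exp (C*T) + 1 with hK₀def
  have hK₀0 : 0 ≤ K₀ := by positivity
  have Hmain : ∀ x s t y s' t' : ℝ, 0 ≤ s → s ≤ t → t ≤ T → 0 ≤ s' → s' ≤ t' → t' ≤ T →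
      s ≤ s' → |X x s t - X y s' t'| ≤ K₀ * max |x - y| (max |s - s'| |t - t'|) := by
    intro x s t y s' t' h0s hst htT h0s' hs't' ht'T hss'
    set D := max |x - y| (max |s - s'| |t - t'|) with hDdef
    have hxD : |x - y| ≤ D := le_max_left _ _
    have hsD : |s - s'| ≤ D := le_trans (le_max_left _ _) (le_max_right _ _)
    have htD : |t - t'| ≤ D := le_trans (le_max_right _ _) (le_max_right _ _)
    have hD0 : (0:ℝ) ≤ D := le_trans (abs_nonneg _) hxD
    have hsI : s ∈ Set.Icc (0:ℝ) T := ⟨h0s, le_trans hst htT⟩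
    have hs'I : s' ∈ Set.Icc (0:ℝ) T := ⟨h0s', le_trans hs't' ht'T⟩
    have hs'T : s' ≤ T := hs'I.2
    have hzb : |X x s s' - x| ≤ M * (s' - s) := (main x s hsI).2.2.2 s' ⟨hss', hs'T⟩
    have hsabs : |s - s'| = s' - s := by
      rw [abs_sub_comm]; exact abs_of_nonneg (by linarith)
    have hzy : |X x s s' - y| ≤ M * D + D := by
      have h1 : |X x s s' - y| ≤ |X x s s' - x| + |x - y| := abs_sub_le _ _ _
      have h2 : M * (s' - s) ≤ M * D := by
        rw [← hsabs]; exact mul_le_mul_of_nonneg_left hsD hM0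
      linarith
    have hexpz : Real.exp (C*T) * |X x s s' - y| ≤ Real.exp (C*T) * (M * D + D) :=
      mul_le_mul_of_nonneg_left hzy (Real.exp_pos _).le
    rcases le_or_gt s' t with hc | hc
    · have h₁ : X x s t = X (X x s s') s' t := (hsg x s s' t h0s hss' hc htT).symm
      have e1 : |X (X x s s') s' t - X (X x s s') s' t'| ≤ M * |t - t'| :=
        hlipt (X x s s') s' hs'I t ⟨hc, htT⟩ t' ⟨hs't', ht'T⟩
      have e2 : |X (X x s s') s' t' - X y s' t'| ≤ Real.exp (C*T) * |X x s s' - y| :=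
        hlipx (X x s s') y s' hs'I t' ⟨hs't', ht'T⟩
      have e3 : M * |t - t'| ≤ M * D := mul_le_mul_of_nonneg_left htD hM0
      calc |X x s t - X y s' t'| = |X (X x s s') s' t - X y s' t'| := by rw [h₁]
        _ ≤ |X (X x s s') s' t - X (X x s s') s' t'|
            + |X (X x s s') s' t' - X y s' t'| := abs_sub_le _ _ _
        _ ≤ M * D + Real.exp (C*T) * (M * D + D) := by linarith
        _ ≤ K₀ * D := by rw [hK₀def]; nlinarith [Real.exp_pos (C*T)]
    · have hz0 : X (X x s s') s' s' = X x s s' := (main (X x s s') s' hs'I).1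
      have e0 : |X x s t - X x s s'| ≤ M * |t - s'| :=
        hlipt x s hsI t ⟨hst, htT⟩ s' ⟨hss', hs'T⟩
      have hts' : |t - s'| ≤ |s - s'| := by
        rw [hsabs, abs_sub_comm, abs_of_nonneg (by linarith : (0:ℝ) ≤ s' - t)]
        linarith
      have e0' : M * |t - s'| ≤ M * D :=
        mul_le_mul_of_nonneg_left (le_trans hts' hsD) hM0
      have e1 : |X (X x s s') s' s' - X (X x s s') s' t'| ≤ M * |s' - t'| :=
        hlipt (X x s s') s' hs'I s' ⟨le_rfl, hs'T⟩ t' ⟨hs't', ht'T⟩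
      have hs't : |s' - t'| ≤ |t - t'| := by
        rw [abs_sub_comm s' t', abs_of_nonneg (by linarith : (0:ℝ) ≤ t' - s'),
          abs_sub_comm t t', abs_of_nonneg (by linarith : (0:ℝ) ≤ t' - t)]
        linarith
      have e1' : M * |s' - t'| ≤ M * D :=
        mul_le_mul_of_nonneg_left (le_trans hs't htD) hM0
      have e2 : |X (X x s s') s' t' - X y s' t'| ≤ Real.exp (C*T) * |X x s s' - y| :=
        hlipx (X x s s') y s' hs'I t' ⟨hs't', ht'T⟩
      calc |X x s t - X y s' t'|
          ≤ |X x s t - X x s s'| + |X x s s' - X y s' t'| := abs_sub_le _ _ _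
        _ = |X x s t - X x s s'| + |X (X x s s') s' s' - X y s' t'| := by rw [hz0]
        _ ≤ |X x s t - X x s s'| + (|X (X x s s') s' s' - X (X x s s') s' t'|
            + |X (X x s s') s' t' - X y s' t'|) := by linarith [abs_sub_le (X (X x s s') s' s') (X (X x s s') s' t') (X y s' t')]
        _ ≤ M * D + (M * D + Real.exp (C*T) * (M * D + D)) := by linarith
        _ ≤ K₀ * D := by rw [hK₀def]; nlinarith [Real.exp_pos (C*T)]
  refine ⟨X, ?_, ?_, ?_⟩
  · intro x s hs
    obtain ⟨hX0, hXc, hXd, hXb⟩ := main x s hs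
    exact ⟨hX0, hXd, huniq x s hs⟩
  · refine ⟨K₀.toNNReal, ?_⟩
    rw [lipschitzOnWith_iff_dist_le_mul]
    intro p hp q hq
    obtain ⟨hp1, hp2, hp3⟩ := hp
    obtain ⟨hq1, hq2, hq3⟩ := hq
    have hdist : dist p q = max |p.1 - q.1| (max |p.2.1 - q.2.1| |p.2.2 - q.2.2|) := by
      rw [Prod.dist_eq, Prod.dist_eq, Real.dist_eq, Real.dist_eq, Real.dist_eq]
    rw [Real.coe_toNNReal _ hK₀0, Real.dist_eq, hdist]
    rcases le_total p.2.1 q.2.1 with hss | hss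
    · exact Hmain p.1 p.2.1 p.2.2 q.1 q.2.1 q.2.2 hp1 hp2 hp3 hq1 hq2 hq3 hss
    · have := Hmain q.1 q.2.1 q.2.2 p.1 p.2.1 p.2.2 hq1 hq2 hq3 hp1 hp2 hp3 hss
      rw [abs_sub_comm (X q.1 q.2.1 q.2.2), abs_sub_comm q.1, abs_sub_comm q.2.1,
        abs_sub_comm q.2.2] at this
      exact this
  · exact hsg
end
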